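/- arXiv:2407.08560 — 6 statements merged into one kernel-verified Lean document; each statement's English description precedes it below -/
import Mathlib

section
/- Under the stated conditional average treatment effect setup with fixed first-stage estimates, define Δ₁ := (1 − T/π⁰(S))·(μ̂(1,S) − μ⁰(1,S)) + (T/π̂(S) − T/π⁰(S))·(Y(1) − μ⁰(1,S)) − (1 − (1−T)/(1−π⁰(S)))·(μ̂(0,S) − μ⁰(0,S)) − ((1−T)/(1−π̂(S)) − (1−T)/(1−π⁰(S)))·(Y(0) − μ⁰(0,S)). Then E[Δ₁ · h(S)] = 0 for every bounded measurable h : ℝ^d → ℝ; equivalently, the conditional expectation of Δ₁ given the σ-algebra generated by S is 0 almost surely. -/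
open MeasureTheory ProbabilityTheory

/-- In the conditional average treatment effect setup with fixed first-stage
estimates, the first-order error term `Δ₁` of the doubly robust pseudo-outcome satisfies
`E[Δ₁ · h(S)] = 0` for every bounded measurable `h`. -/
theorem cate_first_order_error_orthogonal
    {Ω : Type*} [MeasurableSpace Ω] [StandardBorelSpace Ω] [Nonempty Ω]
    (P : Measure Ω) [IsProbabilityMeasure P]
    (d : ℕ) (S : Ω → (Fin d → ℝ)) (hS : Measurable S)
    (T : Ω → ℝ) (hT : Measurable T) (hT01 : ∀ ω, T ω = 0 ∨ T ω = 1)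
    (Y0 Y1 : Ω → ℝ) (hY0 : Measurable Y0) (hY1 : Measurable Y1)
    (hY0b : ∃ C, ∀ ω, |Y0 ω| ≤ C) (hY1b : ∃ C, ∀ ω, |Y1 ω| ≤ C)
    (Y : Ω → ℝ) (hYdef : ∀ ω, Y ω = T ω * Y1 ω + (1 - T ω) * Y0 ω)
    (M : ℝ) (hM : 0 < M)
    (π0 : (Fin d → ℝ) → ℝ) (hπ0m : Measurable π0) (hπ0b : ∃ C, ∀ x, |π0 x| ≤ C)
    (hπ0mom : ∀ h : (Fin d → ℝ) → ℝ, Measurable h → (∃ C, ∀ x, |h x| ≤ C) →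
      ∫ ω, T ω * h (S ω) ∂P = ∫ ω, π0 (S ω) * h (S ω) ∂P)
    (hpos : ∀ᵐ ω ∂P, 1 / M ≤ π0 (S ω) ∧ π0 (S ω) ≤ 1 - 1 / M)
    (μ1 μ0 : (Fin d → ℝ) → ℝ) (hμ1m : Measurable μ1) (hμ0m : Measurable μ0)
    (hμ1b : ∃ C, ∀ x, |μ1 x| ≤ C) (hμ0b : ∃ C, ∀ x, |μ0 x| ≤ C)
    (hμ1mom : ∀ h : (Fin d → ℝ) → ℝ, Measurable h → (∃ C, ∀ x, |h x| ≤ C) →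
      ∫ ω, T ω * Y ω * h (S ω) ∂P = ∫ ω, T ω * μ1 (S ω) * h (S ω) ∂P)
    (hμ0mom : ∀ h : (Fin d → ℝ) → ℝ, Measurable h → (∃ C, ∀ x, |h x| ≤ C) →
      ∫ ω, (1 - T ω) * Y ω * h (S ω) ∂P = ∫ ω, (1 - T ω) * μ0 (S ω) * h (S ω) ∂P)
    (hign : CondIndepFun (MeasurableSpace.comap S inferInstance) hS.comap_le
      (fun ω => (Y0 ω, Y1 ω)) T P)
    (K : ℝ) (hK : 0 < K)
    (πh μh1 μh0 : (Fin d → ℝ) → ℝ)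
    (hπhm : Measurable πh) (hμh1m : Measurable μh1) (hμh0m : Measurable μh0)
    (hμh1b : ∃ C, ∀ x, |μh1 x| ≤ C) (hμh0b : ∃ C, ∀ x, |μh0 x| ≤ C)
    (hπhK : ∀ x, 1 / K ≤ πh x ∧ πh x ≤ 1 - 1 / K)
    (Δ1 : Ω → ℝ)
    (hΔ1 : ∀ ω, Δ1 ω =
      (1 - T ω / π0 (S ω)) * (μh1 (S ω) - μ1 (S ω))
      + (T ω / πh (S ω) - T ω / π0 (S ω)) * (Y1 ω - μ1 (S ω))
      - (1 - (1 - T ω) / (1 - π0 (S ω))) * (μh0 (S ω) - μ0 (S ω))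
      - ((1 - T ω) / (1 - πh (S ω)) - (1 - T ω) / (1 - π0 (S ω))) * (Y0 ω - μ0 (S ω))) :
    ∀ h : (Fin d → ℝ) → ℝ, Measurable h → (∃ C, ∀ x, |h x| ≤ C) →
      ∫ ω, Δ1 ω * h (S ω) ∂P = 0 := by

  intro h hm hb
  classical
  obtain ⟨Ch, hCh⟩ := hb
  obtain ⟨C1, hC1⟩ := hμh1b
  obtain ⟨C0, hC0⟩ := hμh0b
  obtain ⟨Cm1, hCm1⟩ := hμ1b
  obtain ⟨Cm0, hCm0⟩ := hμ0b
  obtain ⟨CY0, hCY0⟩ := hY0b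
  obtain ⟨CY1, hCY1⟩ := hY1b
  -- helper: products of bounded things
  have amul : ∀ {a b A B : ℝ}, |a| ≤ A → |b| ≤ B → |a * b| ≤ A * B := by
    intro a b A B ha hb
    rw [abs_mul]; exact mul_le_mul ha hb (abs_nonneg _) ((abs_nonneg a).trans ha)
  have intb : ∀ (f : Ω → ℝ) (C : ℝ), Measurable f → (∀ ω, |f ω| ≤ C) → Integrable f P := by
    intro f C hf hC
    exact (integrable_const C).mono' hf.aestronglyMeasurable
      (Filter.Eventually.of_forall fun ω => by simpa using hC ω)
  -- M ≥ 2, i.e. 1/M ≤ 1 - 1/M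
  have hM2 : 1 / M ≤ 1 - 1 / M := by
    obtain ⟨ω, h1, h2⟩ := hpos.exists
    linarith
  -- truncated propensity
  set π0' : (Fin d → ℝ) → ℝ := fun x => max (1 / M) (min (π0 x) (1 - 1 / M)) with hπ0'def
  have hπ0'm : Measurable π0' := measurable_const.max (hπ0m.min measurable_const)
  have hπ0'lb : ∀ x, 1 / M ≤ π0' x := fun x => le_max_left _ _
  have hπ0'ub : ∀ x, π0' x ≤ 1 - 1 / M := fun x => max_le hM2 (min_le_right _ _)
  have hπ0'pos : ∀ x, 0 < π0' x := fun x => lt_of_lt_of_le (by positivity) (hπ0'lb x)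
  have hπ0'pos1 : ∀ x, 0 < 1 - π0' x := by
    intro x
    have h1 := hπ0'ub x
    have h2 : (0:ℝ) < 1 / M := by positivity
    linarith
  have haeπ : ∀ᵐ ω ∂P, π0 (S ω) = π0' (S ω) := by
    filter_upwards [hpos] with ω hw
    rw [hπ0'def]; simp only
    rw [min_eq_left hw.2, max_eq_right hw.1]
  -- bounds on inverses
  have hinvπ0' : ∀ x, |1 / π0' x| ≤ M := by
    intro x
    rw [abs_of_pos (div_pos one_pos (hπ0'pos x)), div_le_iff₀ (hπ0'pos x)]
    exact (div_le_iff₀' hM).mp (hπ0'lb x)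
  have hinv1π0' : ∀ x, |1 / (1 - π0' x)| ≤ M := by
    intro x
    rw [abs_of_pos (div_pos one_pos (hπ0'pos1 x)), div_le_iff₀ (hπ0'pos1 x)]
    have hlb : 1 / M ≤ 1 - π0' x := by linarith [hπ0'ub x]
    exact (div_le_iff₀' hM).mp hlb
  have hπhpos : ∀ x, 0 < πh x := fun x => lt_of_lt_of_le (by positivity) (hπhK x).1
  have hπhpos1 : ∀ x, 0 < 1 - πh x := fun x => by
    have h1 : (0:ℝ) < 1/K := by positivity
    linarith [(hπhK x).2]
  have hinvπh : ∀ x, |1 / πh x| ≤ K := by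
    intro x
    rw [abs_of_pos (div_pos one_pos (hπhpos x)), div_le_iff₀ (hπhpos x)]
    exact (div_le_iff₀' hK).mp (hπhK x).1
  have hinv1πh : ∀ x, |1 / (1 - πh x)| ≤ K := by
    intro x
    rw [abs_of_pos (div_pos one_pos (hπhpos1 x)), div_le_iff₀ (hπhpos1 x)]
    have hlb : 1 / K ≤ 1 - πh x := by linarith [(hπhK x).2]
    exact (div_le_iff₀' hK).mp hlb
  -- the correction functions
  set g1 : (Fin d → ℝ) → ℝ := fun x => (μh1 x - μ1 x) * h x * (1 / π0' x) with hg1def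
  set g2 : (Fin d → ℝ) → ℝ := fun x => (1 / πh x - 1 / π0' x) * h x with hg2def
  set g3 : (Fin d → ℝ) → ℝ := fun x => (μh0 x - μ0 x) * h x * (1 / (1 - π0' x)) with hg3def
  set g4 : (Fin d → ℝ) → ℝ := fun x => (1 / (1 - πh x) - 1 / (1 - π0' x)) * h x with hg4def
  have hg1m : Measurable g1 := ((hμh1m.sub hμ1m).mul hm).mul (hπ0'm.const_div 1)
  have hg2m : Measurable g2 := ((hπhm.const_div 1).sub (hπ0'm.const_div 1)).mul hm
  have hg3m : Measurable g3 :=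
    ((hμh0m.sub hμ0m).mul hm).mul ((measurable_const.sub hπ0'm).const_div 1)
  have hg4m : Measurable g4 :=
    (((measurable_const.sub hπhm).const_div 1).sub
      ((measurable_const.sub hπ0'm).const_div 1)).mul hm
  have hg1b : ∀ x, |g1 x| ≤ (C1 + Cm1) * Ch * M := fun x =>
    amul (amul ((abs_sub _ _).trans (add_le_add (hC1 x) (hCm1 x))) (hCh x)) (hinvπ0' x)
  have hg2b : ∀ x, |g2 x| ≤ (K + M) * Ch := fun x =>
    amul ((abs_sub _ _).trans (add_le_add (hinvπh x) (hinvπ0' x))) (hCh x)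
  have hg3b : ∀ x, |g3 x| ≤ (C0 + Cm0) * Ch * M := fun x =>
    amul (amul ((abs_sub _ _).trans (add_le_add (hC0 x) (hCm0 x))) (hCh x)) (hinv1π0' x)
  have hg4b : ∀ x, |g4 x| ≤ (K + M) * Ch := fun x =>
    amul ((abs_sub _ _).trans (add_le_add (hinv1πh x) (hinv1π0' x))) (hCh x)
  -- bounds on random variables
  have hT1 : ∀ ω, |T ω| ≤ 1 := by intro ω; rcases hT01 ω with ht | ht <;> simp [ht]
  have h1T : ∀ ω, |1 - T ω| ≤ 1 := by intro ω; rcases hT01 ω with ht | ht <;> simp [ht]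
  have hCY0nn : 0 ≤ CY0 := (abs_nonneg _).trans (hCY0 (Classical.arbitrary Ω))
  have hCY1nn : 0 ≤ CY1 := (abs_nonneg _).trans (hCY1 (Classical.arbitrary Ω))
  have hYm : Measurable Y := by
    have : Y = fun ω => T ω * Y1 ω + (1 - T ω) * Y0 ω := funext hYdef
    rw [this]
    exact (hT.mul hY1).add ((measurable_const.sub hT).mul hY0)
  have hYb : ∀ ω, |Y ω| ≤ CY0 + CY1 := by
    intro ω
    rw [hYdef ω]
    rcases hT01 ω with ht | ht <;> simp [ht] <;>
      [exact (hCY0 ω).trans (by linarith); exact (hCY1 ω).trans (by linarith)]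
  -- integrability of all the pieces
  have iA1 : Integrable (fun ω => (μh1 (S ω) - μ1 (S ω)) * h (S ω)) P :=
    intb _ ((C1 + Cm1) * Ch) (((hμh1m.sub hμ1m).mul hm).comp hS)
      (fun ω => amul ((abs_sub _ _).trans (add_le_add (hC1 _) (hCm1 _))) (hCh _))
  have iA0 : Integrable (fun ω => (μh0 (S ω) - μ0 (S ω)) * h (S ω)) P :=
    intb _ ((C0 + Cm0) * Ch) (((hμh0m.sub hμ0m).mul hm).comp hS)
      (fun ω => amul ((abs_sub _ _).trans (add_le_add (hC0 _) (hCm0 _))) (hCh _))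
  have iTg1 : Integrable (fun ω => T ω * g1 (S ω)) P :=
    intb _ (1 * ((C1 + Cm1) * Ch * M)) (hT.mul (hg1m.comp hS))
      (fun ω => amul (hT1 ω) (hg1b _))
  have iTYg2 : Integrable (fun ω => T ω * Y ω * g2 (S ω)) P :=
    intb _ (1 * (CY0 + CY1) * ((K + M) * Ch)) ((hT.mul hYm).mul (hg2m.comp hS))
      (fun ω => amul (amul (hT1 ω) (hYb ω)) (hg2b _))
  have iTμ1g2 : Integrable (fun ω => T ω * μ1 (S ω) * g2 (S ω)) P :=
    intb _ (1 * Cm1 * ((K + M) * Ch)) ((hT.mul (hμ1m.comp hS)).mul (hg2m.comp hS))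
      (fun ω => amul (amul (hT1 ω) (hCm1 _)) (hg2b _))
  have i1Tg3 : Integrable (fun ω => (1 - T ω) * g3 (S ω)) P :=
    intb _ (1 * ((C0 + Cm0) * Ch * M)) ((measurable_const.sub hT).mul (hg3m.comp hS))
      (fun ω => amul (h1T ω) (hg3b _))
  have i1TYg4 : Integrable (fun ω => (1 - T ω) * Y ω * g4 (S ω)) P :=
    intb _ (1 * (CY0 + CY1) * ((K + M) * Ch))
      (((measurable_const.sub hT).mul hYm).mul (hg4m.comp hS))
      (fun ω => amul (amul (h1T ω) (hYb ω)) (hg4b _))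
  have i1Tμ0g4 : Integrable (fun ω => (1 - T ω) * μ0 (S ω) * g4 (S ω)) P :=
    intb _ (1 * Cm0 * ((K + M) * Ch))
      (((measurable_const.sub hT).mul (hμ0m.comp hS)).mul (hg4m.comp hS))
      (fun ω => amul (amul (h1T ω) (hCm0 _)) (hg4b _))
  have ig3 : Integrable (fun ω => g3 (S ω)) P :=
    intb _ ((C0 + Cm0) * Ch * M) (hg3m.comp hS) (fun ω => hg3b _)
  have iTg3 : Integrable (fun ω => T ω * g3 (S ω)) P :=
    intb _ (1 * ((C0 + Cm0) * Ch * M)) (hT.mul (hg3m.comp hS))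
      (fun ω => amul (hT1 ω) (hg3b _))
  have iπ0'g3 : Integrable (fun ω => π0' (S ω) * g3 (S ω)) P := by
    refine intb _ (1 * ((C0 + Cm0) * Ch * M)) ((hπ0'm.comp hS).mul (hg3m.comp hS))
      (fun ω => amul ?_ (hg3b _))
    rw [abs_of_pos (hπ0'pos _)]
    have h1 : (0:ℝ) < 1/M := by positivity
    linarith [hπ0'ub (S ω)]
  -- a.e. rewriting of the integrand
  have key : ∀ᵐ ω ∂P, Δ1 ω * h (S ω) =
      ((μh1 (S ω) - μ1 (S ω)) * h (S ω) - T ω * g1 (S ω))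
      + (T ω * Y ω * g2 (S ω) - T ω * μ1 (S ω) * g2 (S ω))
      - ((μh0 (S ω) - μ0 (S ω)) * h (S ω) - (1 - T ω) * g3 (S ω))
      - ((1 - T ω) * Y ω * g4 (S ω) - (1 - T ω) * μ0 (S ω) * g4 (S ω)) := by
    filter_upwards [haeπ] with ω hw
    have e1 : π0' (S ω) ≠ 0 := ne_of_gt (hπ0'pos _)
    have e2 : (1:ℝ) - π0' (S ω) ≠ 0 := ne_of_gt (hπ0'pos1 _)
    have e3 : πh (S ω) ≠ 0 := ne_of_gt (hπhpos _)
    have e4 : (1:ℝ) - πh (S ω) ≠ 0 := ne_of_gt (hπhpos1 _)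
    rw [hΔ1 ω, hYdef ω, hw, hg1def, hg2def, hg3def, hg4def]
    simp only
    rcases hT01 ω with ht | ht <;> rw [ht] <;> field_simp <;> ring
  have iP1 : Integrable (fun ω => (μh1 (S ω) - μ1 (S ω)) * h (S ω) - T ω * g1 (S ω)) P :=
    iA1.sub iTg1
  have iP2 : Integrable (fun ω => T ω * Y ω * g2 (S ω) - T ω * μ1 (S ω) * g2 (S ω)) P :=
    iTYg2.sub iTμ1g2
  have iP3 : Integrable (fun ω => (μh0 (S ω) - μ0 (S ω)) * h (S ω) - (1 - T ω) * g3 (S ω)) P :=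
    iA0.sub i1Tg3
  have iP4 : Integrable
      (fun ω => (1 - T ω) * Y ω * g4 (S ω) - (1 - T ω) * μ0 (S ω) * g4 (S ω)) P :=
    i1TYg4.sub i1Tμ0g4
  have iP12 : Integrable (fun ω =>
      ((μh1 (S ω) - μ1 (S ω)) * h (S ω) - T ω * g1 (S ω))
      + (T ω * Y ω * g2 (S ω) - T ω * μ1 (S ω) * g2 (S ω))) P := iP1.add iP2
  have iP123 : Integrable (fun ω =>
      ((μh1 (S ω) - μ1 (S ω)) * h (S ω) - T ω * g1 (S ω))
      + (T ω * Y ω * g2 (S ω) - T ω * μ1 (S ω) * g2 (S ω))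
      - ((μh0 (S ω) - μ0 (S ω)) * h (S ω) - (1 - T ω) * g3 (S ω))) P := iP12.sub iP3
  rw [integral_congr_ae key]
  rw [integral_sub iP123 iP4, integral_sub iP12 iP3, integral_add iP1 iP2,
      integral_sub iA1 iTg1, integral_sub iTYg2 iTμ1g2,
      integral_sub iA0 i1Tg3, integral_sub i1TYg4 i1Tμ0g4]
  -- the four cancellations
  have e1 : ∫ ω, T ω * g1 (S ω) ∂P = ∫ ω, (μh1 (S ω) - μ1 (S ω)) * h (S ω) ∂P := by
    rw [hπ0mom g1 hg1m ⟨(C1 + Cm1) * Ch * M, hg1b⟩]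
    refine integral_congr_ae ?_
    filter_upwards [haeπ] with ω hw
    rw [hw, hg1def]
    simp only
    field_simp
    rw [mul_assoc]; exact mul_div_cancel_left₀ _ (ne_of_gt (hπ0'pos _))
  have e2 : ∫ ω, T ω * Y ω * g2 (S ω) ∂P = ∫ ω, T ω * μ1 (S ω) * g2 (S ω) ∂P :=
    hμ1mom g2 hg2m ⟨(K + M) * Ch, hg2b⟩
  have e4 : ∫ ω, (1 - T ω) * Y ω * g4 (S ω) ∂P = ∫ ω, (1 - T ω) * μ0 (S ω) * g4 (S ω) ∂P :=
    hμ0mom g4 hg4m ⟨(K + M) * Ch, hg4b⟩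
  have e3 : ∫ ω, (1 - T ω) * g3 (S ω) ∂P = ∫ ω, (μh0 (S ω) - μ0 (S ω)) * h (S ω) ∂P := by
    have step1 : ∫ ω, (1 - T ω) * g3 (S ω) ∂P
        = ∫ ω, g3 (S ω) ∂P - ∫ ω, T ω * g3 (S ω) ∂P := by
      rw [← integral_sub ig3 iTg3]
      refine integral_congr_ae (Filter.Eventually.of_forall fun ω => ?_)
      ring
    rw [step1, hπ0mom g3 hg3m ⟨(C0 + Cm0) * Ch * M, hg3b⟩]
    have step2 : ∫ ω, π0 (S ω) * g3 (S ω) ∂P = ∫ ω, π0' (S ω) * g3 (S ω) ∂P := by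
      refine integral_congr_ae ?_
      filter_upwards [haeπ] with ω hw
      rw [hw]
    rw [step2, ← integral_sub ig3 iπ0'g3]
    refine integral_congr_ae (Filter.Eventually.of_forall fun ω => ?_)
    have e2' : (1:ℝ) - π0' (S ω) ≠ 0 := ne_of_gt (hπ0'pos1 _)
    rw [hg3def]
    simp only
    field_simp
  rw [e1, e2, e3, e4]
  ring
end

section
/- Under the stated dynamic treatment setup with fixed second-exposure estimates, define Δ₁ := (1 − T₂/ρ⁰(S̄₂))·(ν̂(S̄₂) − ν⁰(S̄₂)) + (T₂/ρ̂(S̄₂) − T₂/ρ⁰(S̄₂))·(Y(1,1) − ν⁰(S̄₂)). Then E[T₁ · Δ₁ · h(S₁)] = 0 for every bounded measurable h : ℝ^{d₁} → ℝ; equivalently, the conditional expectation of Δ₁ given σ(S₁) under the conditional probability measure P(· | T₁ = 1) is 0 almost surely. -/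
open MeasureTheory ProbabilityTheory


private lemma dte_bdd_integrable {Ω : Type*} [MeasurableSpace Ω] (P : MeasureTheory.Measure Ω)
    [MeasureTheory.IsFiniteMeasure P] (f : Ω → ℝ) (hf : Measurable f) (C : ℝ)
    (hC : ∀ ω, |f ω| ≤ C) : MeasureTheory.Integrable f P :=
  (MeasureTheory.integrable_const C).mono' hf.aestronglyMeasurable
    (Filter.Eventually.of_forall fun ω => by simpa using hC ω)

private lemma dte_abs_mul_le {a b A B : ℝ} (ha : |a| ≤ A) (hb : |b| ≤ B) : |a * b| ≤ A * B := by
  rw [abs_mul]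
  exact mul_le_mul ha hb (abs_nonneg _) ((abs_nonneg a).trans ha)

/-- In the dynamic treatment setup with fixed second-exposure estimates, the
first-order error term `Δ₁` of the doubly robust pseudo-outcome satisfies
`E[T₁ · Δ₁ · h(S₁)] = 0` for every bounded measurable `h`. -/
theorem dte_first_order_error_orthogonal
    {Ω : Type*} [MeasurableSpace Ω] [StandardBorelSpace Ω] [Nonempty Ω]
    (P : Measure Ω) [IsProbabilityMeasure P]
    (d₁ d₂ : ℕ)
    (S1 : Ω → (Fin d₁ → ℝ)) (hS1 : Measurable S1)
    (S2 : Ω → (Fin d₂ → ℝ)) (hS2 : Measurable S2)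
    (T1 T2 : Ω → ℝ) (hT1 : Measurable T1) (hT2 : Measurable T2)
    (hT1_01 : ∀ ω, T1 ω = 0 ∨ T1 ω = 1) (hT2_01 : ∀ ω, T2 ω = 0 ∨ T2 ω = 1)
    (Y11 : Ω → ℝ) (hY11m : Measurable Y11) (hY11b : ∃ C, ∀ ω, |Y11 ω| ≤ C)
    (Y : Ω → ℝ) (hYm : Measurable Y)
    (hcons : ∀ ω, T1 ω * T2 ω * Y ω = T1 ω * T2 ω * Y11 ω)
    (M : ℝ) (hM : 0 < M)
    (π0 : (Fin d₁ → ℝ) → ℝ) (ρ0 ν0 : (Fin d₁ → ℝ) × (Fin d₂ → ℝ) → ℝ)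
    (μ0 : (Fin d₁ → ℝ) → ℝ)
    (hπ0m : Measurable π0) (hρ0m : Measurable ρ0) (hν0m : Measurable ν0) (hμ0m : Measurable μ0)
    (hπ0b : ∃ C, ∀ x, |π0 x| ≤ C) (hρ0b : ∃ C, ∀ x, |ρ0 x| ≤ C)
    (hν0b : ∃ C, ∀ x, |ν0 x| ≤ C) (hμ0b : ∃ C, ∀ x, |μ0 x| ≤ C)
    (hπ0mom : ∀ h : (Fin d₁ → ℝ) → ℝ, Measurable h → (∃ C, ∀ x, |h x| ≤ C) →
      ∫ ω, T1 ω * h (S1 ω) ∂P = ∫ ω, π0 (S1 ω) * h (S1 ω) ∂P)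
    (hρ0mom : ∀ h : (Fin d₁ → ℝ) × (Fin d₂ → ℝ) → ℝ, Measurable h → (∃ C, ∀ x, |h x| ≤ C) →
      ∫ ω, T1 ω * T2 ω * h (S1 ω, S2 ω) ∂P = ∫ ω, T1 ω * ρ0 (S1 ω, S2 ω) * h (S1 ω, S2 ω) ∂P)
    (hν0mom : ∀ h : (Fin d₁ → ℝ) × (Fin d₂ → ℝ) → ℝ, Measurable h → (∃ C, ∀ x, |h x| ≤ C) →
      ∫ ω, T1 ω * T2 ω * Y11 ω * h (S1 ω, S2 ω) ∂P
        = ∫ ω, T1 ω * T2 ω * ν0 (S1 ω, S2 ω) * h (S1 ω, S2 ω) ∂P)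
    (hμ0mom : ∀ h : (Fin d₁ → ℝ) → ℝ, Measurable h → (∃ C, ∀ x, |h x| ≤ C) →
      ∫ ω, T1 ω * Y11 ω * h (S1 ω) ∂P = ∫ ω, T1 ω * μ0 (S1 ω) * h (S1 ω) ∂P)
    (hpos : ∀ᵐ ω ∂P, 1 / M ≤ π0 (S1 ω) ∧ 1 / M ≤ ρ0 (S1 ω, S2 ω))
    (hign1 : CondIndepFun (MeasurableSpace.comap S1 inferInstance) hS1.comap_le Y11 T1 P)
    (hign2 : CondIndepFun
      (MeasurableSpace.comap (fun ω => (S1 ω, S2 ω)) inferInstance)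
      (Measurable.comap_le (hS1.prodMk hS2))
      Y11 T2 (P[|{ω | T1 ω = 1}]))
    (K : ℝ) (hK : 0 < K)
    (ρh νh : (Fin d₁ → ℝ) × (Fin d₂ → ℝ) → ℝ)
    (hρhm : Measurable ρh) (hνhm : Measurable νh)
    (hρhb : ∃ C, ∀ x, |ρh x| ≤ C) (hνhb : ∃ C, ∀ x, |νh x| ≤ C)
    (hρhK : ∀ x, 1 / K ≤ ρh x)
    (Δ1 : Ω → ℝ)
    (hΔ1 : ∀ ω, Δ1 ω =
      (1 - T2 ω / ρ0 (S1 ω, S2 ω)) * (νh (S1 ω, S2 ω) - ν0 (S1 ω, S2 ω))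
      + (T2 ω / ρh (S1 ω, S2 ω) - T2 ω / ρ0 (S1 ω, S2 ω)) * (Y11 ω - ν0 (S1 ω, S2 ω))) :
    ∀ h : (Fin d₁ → ℝ) → ℝ, Measurable h → (∃ C, ∀ x, |h x| ≤ C) →
      ∫ ω, T1 ω * Δ1 ω * h (S1 ω) ∂P = 0 := by
  intro hfun hmeas hbdd
  obtain ⟨Ch, hCh⟩ := hbdd
  obtain ⟨Cνh, hCνh⟩ := hνhb
  obtain ⟨Cν0, hCν0⟩ := hν0b
  obtain ⟨CY, hCY⟩ := hY11b
  -- truncated propensity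
  set ρ' : (Fin d₁ → ℝ) × (Fin d₂ → ℝ) → ℝ := fun x => max (ρ0 x) M⁻¹ with hρ'def
  have hρ'm : Measurable ρ' := hρ0m.max measurable_const
  have hρ'pos : ∀ x, 0 < ρ' x := fun x => lt_of_lt_of_le (inv_pos.mpr hM) (le_max_right _ _)
  have hρ'ne : ∀ x, ρ' x ≠ 0 := fun x => (hρ'pos x).ne'
  have hρ'invM : ∀ x, (ρ' x)⁻¹ ≤ M := by
    intro x
    rw [inv_le_comm₀ (hρ'pos x) hM]
    exact le_max_right _ _
  have hρhpos : ∀ x, 0 < ρh x := fun x => lt_of_lt_of_le (by positivity) (hρhK x)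
  have hρhne : ∀ x, ρh x ≠ 0 := fun x => (hρhpos x).ne'
  have hρhinvK : ∀ x, (ρh x)⁻¹ ≤ K := by
    intro x
    rw [inv_le_comm₀ (hρhpos x) hK]
    simpa [one_div] using hρhK x
  -- bound constants are nonnegative
  have hCh0 : 0 ≤ Ch := (abs_nonneg _).trans (hCh (fun _ => 0))
  have hCν00 : 0 ≤ Cν0 := (abs_nonneg _).trans (hCν0 ((fun _ => 0), (fun _ => 0)))
  have hCνh0 : 0 ≤ Cνh := (abs_nonneg _).trans (hCνh ((fun _ => 0), (fun _ => 0)))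
  have hT1le : ∀ ω, |T1 ω| ≤ 1 := fun ω => by rcases hT1_01 ω with h | h <;> simp [h]
  have hT2le : ∀ ω, |T2 ω| ≤ 1 := fun ω => by rcases hT2_01 ω with h | h <;> simp [h]
  -- the auxiliary functions
  set g1 : (Fin d₁ → ℝ) × (Fin d₂ → ℝ) → ℝ := fun x => (νh x - ν0 x) * hfun x.1 with hg1def
  set g2 : (Fin d₁ → ℝ) × (Fin d₂ → ℝ) → ℝ := fun x => g1 x / ρ' x with hg2def
  set g3 : (Fin d₁ → ℝ) × (Fin d₂ → ℝ) → ℝ := fun x => ((ρh x)⁻¹ - (ρ' x)⁻¹) * hfun x.1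
    with hg3def
  set g4 : (Fin d₁ → ℝ) × (Fin d₂ → ℝ) → ℝ := fun x => ν0 x * g3 x with hg4def
  have hg1m : Measurable g1 := (hνhm.sub hν0m).mul (hmeas.comp measurable_fst)
  have hg2m : Measurable g2 := hg1m.div hρ'm
  have hg3m : Measurable g3 := (hρhm.inv.sub hρ'm.inv).mul (hmeas.comp measurable_fst)
  have hg4m : Measurable g4 := hν0m.mul hg3m
  have hg1b : ∀ x, |g1 x| ≤ (Cνh + Cν0) * Ch := by
    intro x
    exact dte_abs_mul_le ((abs_sub _ _).trans (add_le_add (hCνh x) (hCν0 x))) (hCh _)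
  have hg2b : ∀ x, |g2 x| ≤ (Cνh + Cν0) * Ch * M := by
    intro x
    rw [hg2def]
    simp only [div_eq_mul_inv]
    refine dte_abs_mul_le (hg1b x) ?_
    rw [abs_inv, abs_of_pos (hρ'pos x)]
    exact hρ'invM x
  have hg3b : ∀ x, |g3 x| ≤ (K + M) * Ch := by
    intro x
    refine dte_abs_mul_le ?_ (hCh _)
    refine (abs_sub _ _).trans (add_le_add ?_ ?_)
    · rw [abs_inv, abs_of_pos (hρhpos x)]; exact hρhinvK x
    · rw [abs_inv, abs_of_pos (hρ'pos x)]; exact hρ'invM x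
  have hg4b : ∀ x, |g4 x| ≤ Cν0 * ((K + M) * Ch) := fun x =>
    dte_abs_mul_le (hCν0 x) (hg3b x)
  have hSm : Measurable (fun ω => (S1 ω, S2 ω)) := hS1.prodMk hS2
  -- integrability of the four pieces
  have hI1 : MeasureTheory.Integrable (fun ω => T1 ω * g1 (S1 ω, S2 ω)) P :=
    dte_bdd_integrable P _ (hT1.mul (hg1m.comp hSm)) (1 * ((Cνh + Cν0) * Ch))
      (fun ω => dte_abs_mul_le (hT1le ω) (hg1b _))
  have hI2 : MeasureTheory.Integrable (fun ω => T1 ω * T2 ω * g2 (S1 ω, S2 ω)) P :=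
    dte_bdd_integrable P _ ((hT1.mul hT2).mul (hg2m.comp hSm)) (1 * 1 * ((Cνh + Cν0) * Ch * M))
      (fun ω => dte_abs_mul_le (dte_abs_mul_le (hT1le ω) (hT2le ω)) (hg2b _))
  have hI3 : MeasureTheory.Integrable (fun ω => T1 ω * T2 ω * Y11 ω * g3 (S1 ω, S2 ω)) P :=
    dte_bdd_integrable P _ (((hT1.mul hT2).mul hY11m).mul (hg3m.comp hSm))
      (1 * 1 * CY * ((K + M) * Ch))
      (fun ω => dte_abs_mul_le (dte_abs_mul_le (dte_abs_mul_le (hT1le ω) (hT2le ω)) (hCY ω))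
        (hg3b _))
  have hI4 : MeasureTheory.Integrable (fun ω => T1 ω * T2 ω * g4 (S1 ω, S2 ω)) P :=
    dte_bdd_integrable P _ ((hT1.mul hT2).mul (hg4m.comp hSm)) (1 * 1 * (Cν0 * ((K + M) * Ch)))
      (fun ω => dte_abs_mul_le (dte_abs_mul_le (hT1le ω) (hT2le ω)) (hg4b _))
  -- a.e. the truncation does nothing
  have hae : ∀ᵐ ω ∂P, ρ0 (S1 ω, S2 ω) = ρ' (S1 ω, S2 ω) := by
    filter_upwards [hpos] with ω hω
    rw [hρ'def]
    rw [eq_comm, max_eq_left_iff]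
    rw [one_div] at hω
    exact hω.2
  -- pointwise (a.e.) decomposition of the integrand
  have hkey : ∀ᵐ ω ∂P, T1 ω * Δ1 ω * hfun (S1 ω) =
      T1 ω * g1 (S1 ω, S2 ω) - T1 ω * T2 ω * g2 (S1 ω, S2 ω)
        + T1 ω * T2 ω * Y11 ω * g3 (S1 ω, S2 ω) - T1 ω * T2 ω * g4 (S1 ω, S2 ω) := by
    filter_upwards [hae] with ω hω
    rw [hΔ1 ω, hω, hg4def, hg3def, hg2def, hg1def]
    have h1 := hρ'ne (S1 ω, S2 ω)
    have h2 := hρhne (S1 ω, S2 ω)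
    field_simp
    ring
  have hsplit : ∫ ω, T1 ω * Δ1 ω * hfun (S1 ω) ∂P =
      (∫ ω, T1 ω * g1 (S1 ω, S2 ω) ∂P) - (∫ ω, T1 ω * T2 ω * g2 (S1 ω, S2 ω) ∂P)
        + (∫ ω, T1 ω * T2 ω * Y11 ω * g3 (S1 ω, S2 ω) ∂P)
        - (∫ ω, T1 ω * T2 ω * g4 (S1 ω, S2 ω) ∂P) := by
    have hI12 : MeasureTheory.Integrable
        (fun ω => T1 ω * g1 (S1 ω, S2 ω) - T1 ω * T2 ω * g2 (S1 ω, S2 ω)) P := hI1.sub hI2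
    have hI123 : MeasureTheory.Integrable
        (fun ω => T1 ω * g1 (S1 ω, S2 ω) - T1 ω * T2 ω * g2 (S1 ω, S2 ω)
          + T1 ω * T2 ω * Y11 ω * g3 (S1 ω, S2 ω)) P := hI12.add hI3
    rw [MeasureTheory.integral_congr_ae hkey,
      MeasureTheory.integral_sub hI123 hI4,
      MeasureTheory.integral_add hI12 hI3,
      MeasureTheory.integral_sub hI1 hI2]
  have e1 : ∫ ω, T1 ω * T2 ω * g2 (S1 ω, S2 ω) ∂P = ∫ ω, T1 ω * g1 (S1 ω, S2 ω) ∂P := by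
    rw [hρ0mom g2 hg2m ⟨(Cνh + Cν0) * Ch * M, hg2b⟩]
    refine MeasureTheory.integral_congr_ae ?_
    filter_upwards [hae] with ω hω
    rw [hω, hg2def]
    field_simp
    rw [mul_right_comm (T1 ω) (ρ' _) (g1 _), mul_div_cancel_right₀ _ (hρ'ne _)]
  have e2 : ∫ ω, T1 ω * T2 ω * Y11 ω * g3 (S1 ω, S2 ω) ∂P
      = ∫ ω, T1 ω * T2 ω * g4 (S1 ω, S2 ω) ∂P := by
    rw [hν0mom g3 hg3m ⟨(K + M) * Ch, hg3b⟩]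
    refine MeasureTheory.integral_congr_ae (Filter.Eventually.of_forall fun ω => ?_)
    rw [hg4def]
    ring
  rw [hsplit, e1, e2]
  ring
end

section
/- Under the stated conditional average treatment effect setup, the doubly robust score Y^# := μ⁰(1,S) + T·(Y − μ⁰(1,S))/π⁰(S) − μ⁰(0,S) − (1−T)·(Y − μ⁰(0,S))/(1 − π⁰(S)) satisfies E[Y^# · h(S)] = E[(Y(1) − Y(0)) · h(S)] for every bounded measurable h : ℝ^d → ℝ; equivalently, the conditional expectation of Y^# given the σ-algebra generated by S equals the conditional expectation of Y(1) − Y(0) given that σ-algebra, almost surely (the doubly robust identification of the conditional average treatment effect). -/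
open MeasureTheory ProbabilityTheory
open scoped ENNReal NNReal

namespace CateDRAux

variable {Ω : Type*} {mΩ : MeasurableSpace Ω} [StandardBorelSpace Ω]

lemma abs_mul_le_of_le {α : Type*} (f g : α → ℝ) {Cf Cg : ℝ} (hf : ∀ x, |f x| ≤ Cf)
    (hg : ∀ x, |g x| ≤ Cg) : ∀ x, |f x * g x| ≤ Cf * Cg := by
  intro x
  rw [abs_mul]
  exact mul_le_mul (hf x) (hg x) (abs_nonneg _) ((abs_nonneg _).trans (hf x))

omit [StandardBorelSpace Ω] in
lemma integrable_of_bdd {P : Measure Ω} [IsFiniteMeasure P] {f : Ω → ℝ} (hf : Measurable f)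
    (hb : ∃ C, ∀ ω, |f ω| ≤ C) : Integrable f P := by
  obtain ⟨C, hC⟩ := hb
  exact (integrable_const C).mono' hf.aestronglyMeasurable
    (Filter.Eventually.of_forall fun ω => by simpa [Real.norm_eq_abs] using hC ω)

/-- Product rule for conditionally independent `W` and a `{0,1}`-valued `T`:
set integrals over `m`-measurable sets of `W * T` equal those of `ρ * E[W|m]`. -/
lemma prod_rule {P : Measure Ω} [IsProbabilityMeasure P]
    {m : MeasurableSpace Ω} (hm : m ≤ mΩ) [SigmaFinite (P.trim hm)]
    {W : Ω → ℝ} (hW : Measurable[mΩ] W) (hWi : Integrable W P)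
    {T : Ω → ℝ} (hT : Measurable[mΩ] T) (hT01 : ∀ ω, T ω = 0 ∨ T ω = 1)
    (hWT : CondIndepFun m hm W T P)
    {B : Set Ω} (hB : MeasurableSet[m] B) :
    ∫ ω in B, W ω * T ω ∂P
      = ∫ ω in B, (P⟦T ⁻¹' {1}|m⟧) ω * (P[W|m]) ω ∂P := by
  letI : MeasurableSpace Ω := mΩ
  set A : Set Ω := T ⁻¹' {1} with hA
  have hAm : MeasurableSet[mΩ] A := hT (measurableSet_singleton 1)
  have hBm : MeasurableSet[mΩ] B := hm B hB
  have hWTeq : (fun ω => W ω * T ω) = A.indicator W := by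
    funext ω
    rcases hT01 ω with h | h <;> simp [Set.indicator, hA, h]
  set ρ : Ω → ℝ := P⟦A|m⟧ with hρdef
  have hρ_sm : StronglyMeasurable[m] ρ := stronglyMeasurable_condExp
  have hρ_meas : Measurable[mΩ] ρ := (hρ_sm.mono hm).measurable
  have hρ_nonneg : 0 ≤ᵐ[P] ρ :=
    condExp_nonneg (Filter.Eventually.of_forall fun ω => Set.indicator_nonneg (by simp) ω)
  have hind_int : ∀ (C : Set Ω), MeasurableSet[mΩ] C →
      Integrable (C.indicator fun _ => (1:ℝ)) P := fun C hC =>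
    integrable_of_bdd ((measurable_const : Measurable[mΩ] fun _ : Ω => (1:ℝ)).indicator hC)
      ⟨1, fun ω => by by_cases h : ω ∈ C <;> simp [Set.indicator_apply, h]⟩
  have hρ_le_one : ρ ≤ᵐ[P] fun _ => (1:ℝ) := by
    have h1 := condExp_mono (μ := P) (m := m) (hind_int A hAm) (integrable_const (1:ℝ))
      (Filter.Eventually.of_forall fun ω => Set.indicator_le_self' (by simp) ω)
    filter_upwards [h1] with ω hω
    simpa [condExp_const hm (1:ℝ)] using hω
  have hρ_bound : ∀ᵐ ω ∂P, ‖ρ ω‖ ≤ 1 := by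
    filter_upwards [hρ_nonneg, hρ_le_one] with ω h0 h1
    rw [Real.norm_eq_abs, abs_le]
    simp only [Pi.zero_apply] at h0
    exact ⟨by linarith, h1⟩
  have hρi : Integrable ρ P := integrable_condExp
  have hWρ : Integrable (fun ω => ρ ω * W ω) P :=
    hWi.bdd_mul hρ_meas.aestronglyMeasurable hρ_bound
  have key : Measure.map W (P.restrict (A ∩ B)) =
      Measure.map W ((P.restrict B).withDensity fun ω => ENNReal.ofReal (ρ ω)) := by
    ext s hs
    have hWs : MeasurableSet[mΩ] (W ⁻¹' s) := hW hs
    rw [Measure.map_apply hW hs, Measure.map_apply hW hs,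
      Measure.restrict_apply hWs, withDensity_apply _ hWs, Measure.restrict_restrict hWs]
    have hCint : Integrable ((W ⁻¹' s ∩ A).indicator fun _ => (1:ℝ)) P :=
      hind_int _ (hWs.inter hAm)
    have hCint' : Integrable ((W ⁻¹' s).indicator fun _ => (1:ℝ)) P := hind_int _ hWs
    have hprod : Integrable (fun ω => ρ ω * (W ⁻¹' s).indicator (fun _ => (1:ℝ)) ω) P :=
      hCint'.bdd_mul hρ_meas.aestronglyMeasurable hρ_bound
    have hpull : P[(fun ω => ρ ω * (W ⁻¹' s).indicator (fun _ => (1:ℝ)) ω)|m]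
        =ᵐ[P] fun ω => ρ ω * (P⟦W ⁻¹' s|m⟧) ω :=
      condExp_stronglyMeasurable_mul_of_bound hm hρ_sm hCint' 1 hρ_bound
    have hci := (condIndepFun_iff_condExp_inter_preimage_eq_mul hW hT).mp hWT s {1} hs
      (measurableSet_singleton 1)
    have hreal : (P (W ⁻¹' s ∩ (A ∩ B))).toReal = ∫ ω in W ⁻¹' s ∩ B, ρ ω ∂P := by
      have l1 : (P (W ⁻¹' s ∩ (A ∩ B))).toReal
          = ∫ ω in B, ((W ⁻¹' s ∩ A).indicator fun _ => (1:ℝ)) ω ∂P := by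
        rw [setIntegral_indicator (hWs.inter hAm), setIntegral_const, smul_eq_mul, mul_one,
          Set.inter_comm B, Set.inter_assoc, Measure.real]
      have l2 : ∫ ω in B, ((W ⁻¹' s ∩ A).indicator fun _ => (1:ℝ)) ω ∂P
          = ∫ ω in B, (P⟦W ⁻¹' s ∩ A|m⟧) ω ∂P := (setIntegral_condExp hm hCint hB).symm
      have l3 : ∫ ω in B, (P⟦W ⁻¹' s ∩ A|m⟧) ω ∂P
          = ∫ ω in B, ρ ω * (P⟦W ⁻¹' s|m⟧) ω ∂P :=
        setIntegral_congr_ae hBm (hci.mono fun ω hω _ => by rw [hω, mul_comm])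
      have r1 : ∫ ω in W ⁻¹' s ∩ B, ρ ω ∂P = ∫ ω in B, (W ⁻¹' s).indicator ρ ω ∂P := by
        rw [setIntegral_indicator hWs, Set.inter_comm]
      have r2 : (W ⁻¹' s).indicator ρ
          = fun ω => ρ ω * (W ⁻¹' s).indicator (fun _ => (1:ℝ)) ω := by
        funext ω; by_cases hω : ω ∈ W ⁻¹' s <;> simp [Set.indicator_apply, hω]
      have r3 : ∫ ω in B, (W ⁻¹' s).indicator ρ ω ∂P
          = ∫ ω in B, ρ ω * (P⟦W ⁻¹' s|m⟧) ω ∂P := by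
        rw [r2, ← setIntegral_condExp hm hprod hB]
        exact setIntegral_congr_ae hBm (hpull.mono fun ω hω _ => hω)
      rw [l1, l2, l3, r1, r3]
    have hfin : P (W ⁻¹' s ∩ (A ∩ B)) ≠ ⊤ := measure_ne_top P _
    rw [← ENNReal.ofReal_toReal hfin, hreal,
      ofReal_integral_eq_lintegral_ofReal hρi.restrict (ae_restrict_of_ae hρ_nonneg)]
  calc ∫ ω in B, W ω * T ω ∂P = ∫ ω in B, A.indicator W ω ∂P := by rw [hWTeq]
    _ = ∫ ω in A ∩ B, W ω ∂P := by rw [setIntegral_indicator hAm, Set.inter_comm]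
    _ = ∫ y, y ∂(Measure.map W (P.restrict (A ∩ B))) :=
        (integral_map hW.aemeasurable aestronglyMeasurable_id).symm
    _ = ∫ y, y ∂(Measure.map W ((P.restrict B).withDensity fun ω => ENNReal.ofReal (ρ ω))) := by
        rw [key]
    _ = ∫ ω, W ω ∂((P.restrict B).withDensity fun ω => ENNReal.ofReal (ρ ω)) :=
        integral_map hW.aemeasurable aestronglyMeasurable_id
    _ = ∫ ω in B, ((ρ ω).toNNReal : ℝ) * W ω ∂P := by
        rw [show (fun ω => ENNReal.ofReal (ρ ω)) = fun ω => ((fun ω => (ρ ω).toNNReal) ω : ℝ≥0∞)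
          from rfl, integral_withDensity_eq_integral_smul
            (show Measurable fun ω => (ρ ω).toNNReal from measurable_real_toNNReal.comp hρ_meas) W]
        simp [NNReal.smul_def]
    _ = ∫ ω in B, ρ ω * W ω ∂P := by
        refine setIntegral_congr_ae hBm ((hρ_nonneg.mono ?_))
        intro ω h0 _
        rw [Real.coe_toNNReal _ (by simpa using h0)]
    _ = ∫ ω in B, (P⟦T ⁻¹' {1}|m⟧) ω * (P[W|m]) ω ∂P := by
        rw [← setIntegral_condExp hm hWρ hB]
        exact setIntegral_congr_ae hBm
          ((condExp_stronglyMeasurable_mul_of_bound hm hρ_sm hWi 1 hρ_bound).mono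
            fun ω hω _ => hω)

end CateDRAux


/-- Doubly robust identification of the conditional average treatment effect:
the doubly robust score `Y^#` has the same conditional mean given `S` as `Y(1) - Y(0)`. -/
theorem cate_doubly_robust_identification
    {Ω : Type*} [MeasurableSpace Ω] [StandardBorelSpace Ω] [Nonempty Ω]
    (P : Measure Ω) [IsProbabilityMeasure P]
    (d : ℕ) (S : Ω → (Fin d → ℝ)) (hS : Measurable S)
    (T : Ω → ℝ) (hT : Measurable T) (hT01 : ∀ ω, T ω = 0 ∨ T ω = 1)
    (Y0 Y1 : Ω → ℝ) (hY0 : Measurable Y0) (hY1 : Measurable Y1)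
    (hY0b : ∃ C, ∀ ω, |Y0 ω| ≤ C) (hY1b : ∃ C, ∀ ω, |Y1 ω| ≤ C)
    (Y : Ω → ℝ) (hYdef : ∀ ω, Y ω = T ω * Y1 ω + (1 - T ω) * Y0 ω)
    (M : ℝ) (hM : 0 < M)
    (π0 : (Fin d → ℝ) → ℝ) (hπ0m : Measurable π0) (hπ0b : ∃ C, ∀ x, |π0 x| ≤ C)
    (hπ0mom : ∀ h : (Fin d → ℝ) → ℝ, Measurable h → (∃ C, ∀ x, |h x| ≤ C) →
      ∫ ω, T ω * h (S ω) ∂P = ∫ ω, π0 (S ω) * h (S ω) ∂P)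
    (hpos : ∀ᵐ ω ∂P, 1 / M ≤ π0 (S ω) ∧ π0 (S ω) ≤ 1 - 1 / M)
    (μ1 μ0 : (Fin d → ℝ) → ℝ) (hμ1m : Measurable μ1) (hμ0m : Measurable μ0)
    (hμ1b : ∃ C, ∀ x, |μ1 x| ≤ C) (hμ0b : ∃ C, ∀ x, |μ0 x| ≤ C)
    (hμ1mom : ∀ h : (Fin d → ℝ) → ℝ, Measurable h → (∃ C, ∀ x, |h x| ≤ C) →
      ∫ ω, T ω * Y ω * h (S ω) ∂P = ∫ ω, T ω * μ1 (S ω) * h (S ω) ∂P)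
    (hμ0mom : ∀ h : (Fin d → ℝ) → ℝ, Measurable h → (∃ C, ∀ x, |h x| ≤ C) →
      ∫ ω, (1 - T ω) * Y ω * h (S ω) ∂P = ∫ ω, (1 - T ω) * μ0 (S ω) * h (S ω) ∂P)
    (hign : CondIndepFun (MeasurableSpace.comap S inferInstance) hS.comap_le
      (fun ω => (Y0 ω, Y1 ω)) T P) :
    ∀ h : (Fin d → ℝ) → ℝ, Measurable h → (∃ C, ∀ x, |h x| ≤ C) →
      ∫ ω, (μ1 (S ω) + T ω * (Y ω - μ1 (S ω)) / π0 (S ω)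
          - μ0 (S ω) - (1 - T ω) * (Y ω - μ0 (S ω)) / (1 - π0 (S ω))) * h (S ω) ∂P
        = ∫ ω, (Y1 ω - Y0 ω) * h (S ω) ∂P := by
  classical
  intro h hhm hhb
  obtain ⟨Ch, hCh⟩ := hhb
  obtain ⟨C1, hC1⟩ := hY1b
  obtain ⟨C0, hC0⟩ := hY0b
  obtain ⟨Cπ, hCπ⟩ := hπ0b
  obtain ⟨Cm1, hCm1⟩ := hμ1b
  obtain ⟨Cm0, hCm0⟩ := hμ0b
  have hCh0 : 0 ≤ Ch := le_trans (abs_nonneg _) (hCh fun _ => 0)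
  letI mW : MeasurableSpace Ω := inferInstance
  set m : MeasurableSpace Ω := MeasurableSpace.comap S inferInstance with hmdef
  letI : MeasurableSpace Ω := mW
  have hm : m ≤ mW := hS.comap_le
  haveI hfin : IsFiniteMeasure (P.trim hm) :=
    ⟨by rw [trim_measurableSet_eq hm MeasurableSet.univ]; exact measure_lt_top P _⟩
  have hSm : Measurable[m] S := Measurable.of_comap_le le_rfl
  have hcomp : ∀ {g : (Fin d → ℝ) → ℝ}, Measurable g →
      StronglyMeasurable[m] (fun ω => g (S ω)) :=
    fun hg => (hg.comp hSm).stronglyMeasurable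
  have hInt : ∀ {f : Ω → ℝ}, Measurable f → (∃ C, ∀ ω, |f ω| ≤ C) → Integrable f P :=
    fun hf hb => CateDRAux.integrable_of_bdd hf hb
  have hYm : Measurable Y := by
    rw [show Y = fun ω => T ω * Y1 ω + (1 - T ω) * Y0 ω from funext hYdef]
    exact (hT.mul hY1).add ((measurable_const.sub hT).mul hY0)
  have hYb : ∀ ω, |Y ω| ≤ max C1 C0 := by
    intro ω
    rcases hT01 ω with h' | h' <;> rw [hYdef ω, h']
    · simpa using le_trans (hC0 ω) (le_max_right C1 C0)
    · simpa using le_trans (hC1 ω) (le_max_left C1 C0)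
  have hTb : ∀ ω, |T ω| ≤ 1 := fun ω => by rcases hT01 ω with h' | h' <;> simp [h']
  have hπ0Sm : Measurable fun ω => π0 (S ω) := hπ0m.comp hS
  have hμ1Sm : Measurable fun ω => μ1 (S ω) := hμ1m.comp hS
  have hμ0Sm : Measurable fun ω => μ0 (S ω) := hμ0m.comp hS
  have hhSm : Measurable fun ω => h (S ω) := hhm.comp hS
  have h1πSm : Measurable fun ω => 1 - π0 (S ω) := measurable_const.sub hπ0Sm
  have h1Cπ : ∀ x, |1 - π0 x| ≤ 1 + Cπ := by
    intro x
    have hx := abs_le.mp (hCπ x)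
    rw [abs_le]
    constructor <;> linarith [hx.1, hx.2]
  -- indicator helpers
  have hindm : ∀ {u : Set (Fin d → ℝ)}, MeasurableSet u →
      Measurable (Set.indicator u fun _ => (1:ℝ)) := fun hu => measurable_const.indicator hu
  have hindb : ∀ (u : Set (Fin d → ℝ)) x, |Set.indicator u (fun _ => (1:ℝ)) x| ≤ 1 := by
    intro u x
    by_cases hx : x ∈ u <;> simp [Set.indicator_apply, hx]
  have hconv : ∀ (f : Ω → ℝ) {u : Set (Fin d → ℝ)}, MeasurableSet u →
      ∫ ω, f ω * Set.indicator u (fun _ => (1:ℝ)) (S ω) ∂P = ∫ ω in S ⁻¹' u, f ω ∂P := by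
    intro f u hu
    rw [← integral_indicator (hS hu)]
    congr 1
    funext ω
    by_cases hω : S ω ∈ u <;>
      simp [Set.indicator_apply, hω, Set.mem_preimage]
  -- T as an indicator
  set A : Set Ω := T ⁻¹' {1} with hAdef
  have hAm : MeasurableSet A := hT (measurableSet_singleton 1)
  have hTA : ∀ ω, Set.indicator A (fun _ => (1:ℝ)) ω = T ω := by
    intro ω
    rcases hT01 ω with h' | h' <;>
      simp [Set.indicator_apply, hAdef, Set.mem_preimage, h']
  set ρ : Ω → ℝ := P⟦A|m⟧ with hρdef
  -- ρ = π0 ∘ S a.e.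
  have hρ_eq : (fun ω => π0 (S ω)) =ᵐ[P] ρ := by
    refine ae_eq_condExp_of_forall_setIntegral_eq hm
      (hInt (measurable_const.indicator hAm) ⟨1, fun ω => by
        by_cases hω : ω ∈ A <;> simp [Set.indicator_apply, hω]⟩)
      (fun s _ _ => (hInt hπ0Sm ⟨Cπ, fun ω => hCπ (S ω)⟩).integrableOn) ?_
      ((hcomp hπ0m).aestronglyMeasurable)
    intro s hs _
    obtain ⟨u, hu, rfl⟩ := hs
    calc ∫ ω in S ⁻¹' u, π0 (S ω) ∂P
        = ∫ ω, π0 (S ω) * Set.indicator u (fun _ => (1:ℝ)) (S ω) ∂P := (hconv _ hu).symm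
      _ = ∫ ω, T ω * Set.indicator u (fun _ => (1:ℝ)) (S ω) ∂P :=
          (hπ0mom _ (hindm hu) ⟨1, hindb u⟩).symm
      _ = ∫ ω in S ⁻¹' u, T ω ∂P := hconv T hu
      _ = ∫ ω in S ⁻¹' u, Set.indicator A (fun _ => (1:ℝ)) ω ∂P := by
          rw [show (Set.indicator A fun _ => (1:ℝ)) = T from funext hTA]
  -- conditional independence of each potential outcome from T
  have hY1T : CondIndepFun m hm Y1 T P := hign.comp measurable_snd measurable_id
  have hY0T : CondIndepFun m hm Y0 T P := hign.comp measurable_fst measurable_id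
  have hPR1 : ∀ {B : Set Ω}, MeasurableSet[m] B →
      ∫ ω in B, Y1 ω * T ω ∂P = ∫ ω in B, ρ ω * (P[Y1|m]) ω ∂P :=
    fun hB => CateDRAux.prod_rule hm hY1 (hInt hY1 ⟨C1, hC1⟩) hT hT01 hY1T hB
  have hPR0 : ∀ {B : Set Ω}, MeasurableSet[m] B →
      ∫ ω in B, Y0 ω * T ω ∂P = ∫ ω in B, ρ ω * (P[Y0|m]) ω ∂P :=
    fun hB => CateDRAux.prod_rule hm hY0 (hInt hY0 ⟨C0, hC0⟩) hT hT01 hY0T hB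
  set ξ1 : Ω → ℝ := P[Y1|m] with hξ1def
  set ξ0 : Ω → ℝ := P[Y0|m] with hξ0def
  -- identify ξ1 with μ1 ∘ S
  have key1 : (fun ω => π0 (S ω) * ξ1 ω) =ᵐ[P] fun ω => π0 (S ω) * μ1 (S ω) := by
    refine ae_eq_of_forall_setIntegral_eq_of_sigmaFinite' hm
      (fun s _ _ => (integrable_condExp.bdd_mul hπ0Sm.aestronglyMeasurable
        (Filter.Eventually.of_forall fun ω => by
          simpa [Real.norm_eq_abs] using hCπ (S ω))).integrableOn)
      (fun s _ _ => (hInt (f := fun ω => π0 (S ω) * μ1 (S ω)) (hπ0Sm.mul hμ1Sm)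
        ⟨Cπ * Cm1, CateDRAux.abs_mul_le_of_le (fun ω => π0 (S ω)) (fun ω => μ1 (S ω))
          (fun ω' => hCπ (S ω')) (fun ω' => hCm1 (S ω'))⟩).integrableOn)
      ?_ (((hcomp hπ0m).mul stronglyMeasurable_condExp).aestronglyMeasurable)
      (((hcomp hπ0m).mul (hcomp hμ1m)).aestronglyMeasurable)
    intro s hs _
    obtain ⟨u, hu, rfl⟩ := hs
    have hsm : MeasurableSet[m] (S ⁻¹' u) := ⟨u, hu, rfl⟩
    calc ∫ ω in S ⁻¹' u, π0 (S ω) * ξ1 ω ∂P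
        = ∫ ω in S ⁻¹' u, ρ ω * ξ1 ω ∂P :=
          setIntegral_congr_ae (hm _ hsm) (hρ_eq.mono fun ω hω _ => by rw [show π0 (S ω) = ρ ω from hω])
      _ = ∫ ω in S ⁻¹' u, Y1 ω * T ω ∂P := (hPR1 hsm).symm
      _ = ∫ ω in S ⁻¹' u, T ω * Y ω ∂P := by
          refine setIntegral_congr_fun (hm _ hsm) fun ω _ => ?_
          rcases hT01 ω with h' | h' <;> rw [hYdef ω] <;> simp [h'] <;> ring
      _ = ∫ ω, T ω * Y ω * Set.indicator u (fun _ => (1:ℝ)) (S ω) ∂P :=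
          (hconv _ hu).symm
      _ = ∫ ω, T ω * μ1 (S ω) * Set.indicator u (fun _ => (1:ℝ)) (S ω) ∂P :=
          hμ1mom _ (hindm hu) ⟨1, hindb u⟩
      _ = ∫ ω, T ω * (fun x => μ1 x * Set.indicator u (fun _ => (1:ℝ)) x) (S ω) ∂P := by
          simp only [mul_assoc]
      _ = ∫ ω, π0 (S ω) * (fun x => μ1 x * Set.indicator u (fun _ => (1:ℝ)) x) (S ω) ∂P :=
          hπ0mom _ (hμ1m.mul (hindm hu)) ⟨Cm1 * 1, CateDRAux.abs_mul_le_of_le μ1 (Set.indicator u fun _ => (1:ℝ)) hCm1 (hindb u)⟩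
      _ = ∫ ω, π0 (S ω) * μ1 (S ω) * Set.indicator u (fun _ => (1:ℝ)) (S ω) ∂P := by
          simp only [mul_assoc]
      _ = ∫ ω in S ⁻¹' u, π0 (S ω) * μ1 (S ω) ∂P := hconv _ hu
  have hξ1eq : ξ1 =ᵐ[P] fun ω => μ1 (S ω) := by
    filter_upwards [key1, hpos] with ω hω hp
    have hne : π0 (S ω) ≠ 0 :=
      ne_of_gt (lt_of_lt_of_le (by positivity) hp.1)
    exact mul_left_cancel₀ hne hω
  -- identify ξ0 with μ0 ∘ S
  have key0 : (fun ω => (1 - π0 (S ω)) * ξ0 ω) =ᵐ[P] fun ω => (1 - π0 (S ω)) * μ0 (S ω) := by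
    have h1πsm : StronglyMeasurable[m] fun ω => 1 - π0 (S ω) :=
      hcomp (show Measurable fun x => 1 - π0 x from measurable_const.sub hπ0m)
    refine ae_eq_of_forall_setIntegral_eq_of_sigmaFinite' hm
      (fun s _ _ => (integrable_condExp.bdd_mul
        h1πSm.aestronglyMeasurable
        (Filter.Eventually.of_forall fun ω => by
          simpa [Real.norm_eq_abs] using h1Cπ (S ω))).integrableOn)
      (fun s _ _ => (hInt (f := fun ω => (1 - π0 (S ω)) * μ0 (S ω)) (h1πSm.mul hμ0Sm)
        ⟨(1 + Cπ) * Cm0, CateDRAux.abs_mul_le_of_le (fun ω => 1 - π0 (S ω)) (fun ω => μ0 (S ω))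
          (fun ω' => h1Cπ (S ω')) (fun ω' => hCm0 (S ω'))⟩).integrableOn)
      ?_ ((h1πsm.mul stronglyMeasurable_condExp).aestronglyMeasurable)
      ((h1πsm.mul (hcomp hμ0m)).aestronglyMeasurable)
    intro s hs _
    obtain ⟨u, hu, rfl⟩ := hs
    have hsm : MeasurableSet[m] (S ⁻¹' u) := ⟨u, hu, rfl⟩
    have hintY0T : Integrable (fun ω => Y0 ω * T ω) P :=
      hInt (hY0.mul hT) ⟨C0 * 1, CateDRAux.abs_mul_le_of_le Y0 T hC0 hTb⟩
    calc ∫ ω in S ⁻¹' u, (1 - π0 (S ω)) * ξ0 ω ∂P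
        = ∫ ω in S ⁻¹' u, (ξ0 ω - π0 (S ω) * ξ0 ω) ∂P := by
          refine setIntegral_congr_fun (hm _ hsm) fun ω _ => ?_
          ring
      _ = ∫ ω in S ⁻¹' u, ξ0 ω ∂P - ∫ ω in S ⁻¹' u, π0 (S ω) * ξ0 ω ∂P :=
          integral_sub integrable_condExp.integrableOn
            ((integrable_condExp.bdd_mul hπ0Sm.aestronglyMeasurable
              (Filter.Eventually.of_forall fun ω => by
                simpa [Real.norm_eq_abs] using hCπ (S ω))).integrableOn)
      _ = ∫ ω in S ⁻¹' u, Y0 ω ∂P - ∫ ω in S ⁻¹' u, ρ ω * ξ0 ω ∂P := by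
          rw [setIntegral_condExp hm (hInt hY0 ⟨C0, hC0⟩) hsm]
          congr 1
          exact setIntegral_congr_ae (hm _ hsm) (hρ_eq.mono fun ω hω _ => by rw [show π0 (S ω) = ρ ω from hω])
      _ = ∫ ω in S ⁻¹' u, Y0 ω ∂P - ∫ ω in S ⁻¹' u, Y0 ω * T ω ∂P := by
          rw [hPR0 hsm]
      _ = ∫ ω in S ⁻¹' u, (Y0 ω - Y0 ω * T ω) ∂P :=
          (integral_sub (hInt hY0 ⟨C0, hC0⟩).integrableOn hintY0T.integrableOn).symm
      _ = ∫ ω in S ⁻¹' u, (1 - T ω) * Y ω ∂P := by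
          refine setIntegral_congr_fun (hm _ hsm) fun ω _ => ?_
          rcases hT01 ω with h' | h' <;> rw [hYdef ω] <;> simp [h'] <;> ring
      _ = ∫ ω, (1 - T ω) * Y ω * Set.indicator u (fun _ => (1:ℝ)) (S ω) ∂P :=
          (hconv _ hu).symm
      _ = ∫ ω, (1 - T ω) * μ0 (S ω) * Set.indicator u (fun _ => (1:ℝ)) (S ω) ∂P :=
          hμ0mom _ (hindm hu) ⟨1, hindb u⟩
      _ = ∫ ω, ((1 - π0 (S ω)) * μ0 (S ω)) * Set.indicator u (fun _ => (1:ℝ)) (S ω) ∂P := by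
          have i_a : Integrable (fun ω => μ0 (S ω) * Set.indicator u (fun _ => (1:ℝ)) (S ω)) P :=
            hInt (hμ0Sm.mul (show Measurable fun ω => Set.indicator u (fun _ => (1:ℝ)) (S ω)
                from (hindm hu).comp hS))
              ⟨Cm0 * 1, CateDRAux.abs_mul_le_of_le (fun ω => μ0 (S ω))
                (fun ω => Set.indicator u (fun _ => (1:ℝ)) (S ω))
                (fun ω' => hCm0 (S ω')) (fun ω' => hindb u (S ω'))⟩
          have i_b : Integrable
              (fun ω => T ω * (μ0 (S ω) * Set.indicator u (fun _ => (1:ℝ)) (S ω))) P :=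
            hInt (hT.mul (hμ0Sm.mul (show Measurable fun ω =>
                  Set.indicator u (fun _ => (1:ℝ)) (S ω) from (hindm hu).comp hS)))
              ⟨1 * (Cm0 * 1), CateDRAux.abs_mul_le_of_le T
                (fun ω => μ0 (S ω) * Set.indicator u (fun _ => (1:ℝ)) (S ω)) hTb
                (fun ω' => CateDRAux.abs_mul_le_of_le μ0 (Set.indicator u fun _ => (1:ℝ))
                  hCm0 (hindb u) (S ω'))⟩
          have i_c : Integrable
              (fun ω => π0 (S ω) * (μ0 (S ω) * Set.indicator u (fun _ => (1:ℝ)) (S ω))) P :=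
            hInt (hπ0Sm.mul (hμ0Sm.mul (show Measurable fun ω =>
                  Set.indicator u (fun _ => (1:ℝ)) (S ω) from (hindm hu).comp hS)))
              ⟨Cπ * (Cm0 * 1), CateDRAux.abs_mul_le_of_le (fun ω => π0 (S ω))
                (fun ω => μ0 (S ω) * Set.indicator u (fun _ => (1:ℝ)) (S ω))
                (fun ω' => hCπ (S ω'))
                (fun ω' => CateDRAux.abs_mul_le_of_le μ0 (Set.indicator u fun _ => (1:ℝ))
                  hCm0 (hindb u) (S ω'))⟩
          have e_mom : ∫ ω, T ω * (μ0 (S ω) * Set.indicator u (fun _ => (1:ℝ)) (S ω)) ∂P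
              = ∫ ω, π0 (S ω) * (μ0 (S ω) * Set.indicator u (fun _ => (1:ℝ)) (S ω)) ∂P := by
            have := hπ0mom (fun x => μ0 x * Set.indicator u (fun _ => (1:ℝ)) x)
              (hμ0m.mul (hindm hu))
              ⟨Cm0 * 1, CateDRAux.abs_mul_le_of_le μ0 (Set.indicator u fun _ => (1:ℝ))
                hCm0 (hindb u)⟩
            simpa using this
          calc ∫ ω, (1 - T ω) * μ0 (S ω) * Set.indicator u (fun _ => (1:ℝ)) (S ω) ∂P
              = ∫ ω, (μ0 (S ω) * Set.indicator u (fun _ => (1:ℝ)) (S ω)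
                  - T ω * (μ0 (S ω) * Set.indicator u (fun _ => (1:ℝ)) (S ω))) ∂P := by
                refine integral_congr_ae (Filter.Eventually.of_forall fun ω => ?_)
                ring
            _ = ∫ ω, μ0 (S ω) * Set.indicator u (fun _ => (1:ℝ)) (S ω) ∂P
                  - ∫ ω, T ω * (μ0 (S ω) * Set.indicator u (fun _ => (1:ℝ)) (S ω)) ∂P :=
                integral_sub i_a i_b
            _ = ∫ ω, μ0 (S ω) * Set.indicator u (fun _ => (1:ℝ)) (S ω) ∂P
                  - ∫ ω, π0 (S ω) * (μ0 (S ω) * Set.indicator u (fun _ => (1:ℝ)) (S ω)) ∂P := by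
                rw [e_mom]
            _ = ∫ ω, (μ0 (S ω) * Set.indicator u (fun _ => (1:ℝ)) (S ω)
                  - π0 (S ω) * (μ0 (S ω) * Set.indicator u (fun _ => (1:ℝ)) (S ω))) ∂P :=
                (integral_sub i_a i_c).symm
            _ = ∫ ω, ((1 - π0 (S ω)) * μ0 (S ω)) * Set.indicator u (fun _ => (1:ℝ)) (S ω) ∂P := by
                refine integral_congr_ae (Filter.Eventually.of_forall fun ω => ?_)
                ring
      _ = ∫ ω in S ⁻¹' u, (1 - π0 (S ω)) * μ0 (S ω) ∂P := hconv _ hu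
  have hξ0eq : ξ0 =ᵐ[P] fun ω => μ0 (S ω) := by
    filter_upwards [key0, hpos] with ω hω hp
    have hne : 1 - π0 (S ω) ≠ 0 := by
      have h2 := hp.2
      have : 0 < 1 / M := by positivity
      intro hc
      nlinarith
    exact mul_left_cancel₀ hne hω
  -- consequences: integrals of Y1, Y0 against h ∘ S
  have pullout : ∀ (W : Ω → ℝ), Measurable W → (∃ C, ∀ ω, |W ω| ≤ C) →
      ∫ ω, W ω * h (S ω) ∂P = ∫ ω, (P[W|m]) ω * h (S ω) ∂P := by
    intro W hWm hWb
    have hint : Integrable W P := hInt hWm hWb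
    have hpull := condExp_stronglyMeasurable_mul_of_bound hm (hcomp hhm) hint Ch
      (Filter.Eventually.of_forall fun ω => by
        simpa [Real.norm_eq_abs] using hCh (S ω))
    calc ∫ ω, W ω * h (S ω) ∂P
        = ∫ ω, (fun ω => h (S ω)) ω * W ω ∂P := by
          refine integral_congr_ae (Filter.Eventually.of_forall fun ω => ?_)
          simp only
          ring
      _ = ∫ ω, (P[(fun ω => (fun ω => h (S ω)) ω * W ω)|m]) ω ∂P := (integral_condExp hm).symm
      _ = ∫ ω, (fun ω => h (S ω)) ω * (P[W|m]) ω ∂P := integral_congr_ae hpull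
      _ = ∫ ω, (P[W|m]) ω * h (S ω) ∂P := by
          refine integral_congr_ae (Filter.Eventually.of_forall fun ω => ?_)
          simp only
          ring
  have hfin1 : ∫ ω, Y1 ω * h (S ω) ∂P = ∫ ω, μ1 (S ω) * h (S ω) ∂P := by
    rw [pullout Y1 hY1 ⟨C1, hC1⟩]
    exact integral_congr_ae (hξ1eq.mul (Filter.EventuallyEq.rfl (f := fun ω => h (S ω))))
  have hfin0 : ∫ ω, Y0 ω * h (S ω) ∂P = ∫ ω, μ0 (S ω) * h (S ω) ∂P := by
    rw [pullout Y0 hY0 ⟨C0, hC0⟩]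
    exact integral_congr_ae (hξ0eq.mul (Filter.EventuallyEq.rfl (f := fun ω => h (S ω))))
  -- truncated inverse-propensity weights
  set g1 : (Fin d → ℝ) → ℝ := fun x =>
    if 1 / M ≤ π0 x ∧ π0 x ≤ 1 - 1 / M then h x / π0 x else 0 with hg1def
  set g0 : (Fin d → ℝ) → ℝ := fun x =>
    if 1 / M ≤ π0 x ∧ π0 x ≤ 1 - 1 / M then h x / (1 - π0 x) else 0 with hg0def
  have hsetm : MeasurableSet {x : Fin d → ℝ | 1 / M ≤ π0 x ∧ π0 x ≤ 1 - 1 / M} :=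
    (measurableSet_le measurable_const hπ0m).inter (measurableSet_le hπ0m measurable_const)
  have hg1m : Measurable g1 := Measurable.ite hsetm (hhm.div hπ0m) measurable_const
  have hg0m : Measurable g0 :=
    Measurable.ite hsetm (hhm.div (measurable_const.sub hπ0m)) measurable_const
  have hMpos : 0 < 1 / M := by positivity
  have hgb : ∀ (x : Fin d → ℝ) (a : ℝ), 1 / M ≤ a → |h x / a| ≤ Ch * M := by
    intro x a ha
    have ha0 : 0 < a := lt_of_lt_of_le hMpos ha
    rw [abs_div, abs_of_pos ha0]
    calc |h x| / a ≤ Ch / (1 / M) := div_le_div₀ hCh0 (hCh x) hMpos ha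
      _ = Ch * M := by field_simp
  have hg1b : ∀ x, |g1 x| ≤ Ch * M := by
    intro x
    simp only [hg1def]
    split_ifs with hx
    · exact hgb x _ hx.1
    · simpa using by positivity
  have hg0b : ∀ x, |g0 x| ≤ Ch * M := by
    intro x
    simp only [hg0def]
    split_ifs with hx
    · refine hgb x _ ?_
      linarith [hx.2]
    · simpa using by positivity
  -- decompose the doubly robust score
  have hae : (fun ω => (μ1 (S ω) + T ω * (Y ω - μ1 (S ω)) / π0 (S ω)
        - μ0 (S ω) - (1 - T ω) * (Y ω - μ0 (S ω)) / (1 - π0 (S ω))) * h (S ω))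
      =ᵐ[P] fun ω => (μ1 (S ω) * h (S ω) - μ0 (S ω) * h (S ω))
        + (T ω * Y ω * g1 (S ω) - T ω * μ1 (S ω) * g1 (S ω))
        - ((1 - T ω) * Y ω * g0 (S ω) - (1 - T ω) * μ0 (S ω) * g0 (S ω)) := by
    filter_upwards [hpos] with ω hp
    have e1 : g1 (S ω) = h (S ω) / π0 (S ω) := by simp only [hg1def]; exact if_pos hp
    have e0 : g0 (S ω) = h (S ω) / (1 - π0 (S ω)) := by simp only [hg0def]; exact if_pos hp
    rw [e1, e0]
    ring
  -- integrability of the pieces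
  have i1 : Integrable (fun ω => μ1 (S ω) * h (S ω)) P :=
    hInt (hμ1Sm.mul hhSm)
      ⟨Cm1 * Ch, CateDRAux.abs_mul_le_of_le (fun ω => μ1 (S ω)) (fun ω => h (S ω)) (fun ω' => hCm1 (S ω')) (fun ω' => hCh (S ω'))⟩
  have i0 : Integrable (fun ω => μ0 (S ω) * h (S ω)) P :=
    hInt (hμ0Sm.mul hhSm)
      ⟨Cm0 * Ch, CateDRAux.abs_mul_le_of_le (fun ω => μ0 (S ω)) (fun ω => h (S ω)) (fun ω' => hCm0 (S ω')) (fun ω' => hCh (S ω'))⟩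
  have iTY : Integrable (fun ω => T ω * Y ω * g1 (S ω)) P :=
    hInt ((hT.mul hYm).mul ((hg1m.comp hS : Measurable fun ω => g1 (S ω))))
      ⟨1 * max C1 C0 * (Ch * M), CateDRAux.abs_mul_le_of_le (fun ω => T ω * Y ω) (fun ω => g1 (S ω)) (CateDRAux.abs_mul_le_of_le T Y hTb hYb) (fun ω' => hg1b (S ω'))⟩
  have iTμ : Integrable (fun ω => T ω * μ1 (S ω) * g1 (S ω)) P :=
    hInt ((hT.mul (hμ1m.comp hS)).mul ((hg1m.comp hS : Measurable fun ω => g1 (S ω))))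
      ⟨1 * Cm1 * (Ch * M), CateDRAux.abs_mul_le_of_le (fun ω => T ω * μ1 (S ω)) (fun ω => g1 (S ω)) (CateDRAux.abs_mul_le_of_le T (fun ω => μ1 (S ω)) hTb fun ω' => hCm1 (S ω')) (fun ω' => hg1b (S ω'))⟩
  have hTb' : ∀ ω, |1 - T ω| ≤ 1 := fun ω => by rcases hT01 ω with h' | h' <;> simp [h']
  have iTY' : Integrable (fun ω => (1 - T ω) * Y ω * g0 (S ω)) P :=
    hInt (((measurable_const.sub hT).mul hYm).mul ((hg0m.comp hS : Measurable fun ω => g0 (S ω))))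
      ⟨1 * max C1 C0 * (Ch * M), CateDRAux.abs_mul_le_of_le (fun ω => (1 - T ω) * Y ω) (fun ω => g0 (S ω)) (CateDRAux.abs_mul_le_of_le (fun ω => 1 - T ω) Y hTb' hYb) (fun ω' => hg0b (S ω'))⟩
  have iTμ' : Integrable (fun ω => (1 - T ω) * μ0 (S ω) * g0 (S ω)) P :=
    hInt (((measurable_const.sub hT).mul (hμ0m.comp hS)).mul ((hg0m.comp hS : Measurable fun ω => g0 (S ω))))
      ⟨1 * Cm0 * (Ch * M), CateDRAux.abs_mul_le_of_le (fun ω => (1 - T ω) * μ0 (S ω)) (fun ω => g0 (S ω)) (CateDRAux.abs_mul_le_of_le (fun ω => 1 - T ω) (fun ω => μ0 (S ω)) hTb' fun ω' => hCm0 (S ω')) (fun ω' => hg0b (S ω'))⟩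
  have iY1 : Integrable (fun ω => Y1 ω * h (S ω)) P :=
    hInt (hY1.mul hhSm)
      ⟨C1 * Ch, CateDRAux.abs_mul_le_of_le Y1 (fun ω => h (S ω)) hC1 (fun ω' => hCh (S ω'))⟩
  have iY0 : Integrable (fun ω => Y0 ω * h (S ω)) P :=
    hInt (hY0.mul hhSm)
      ⟨C0 * Ch, CateDRAux.abs_mul_le_of_le Y0 (fun ω => h (S ω)) hC0 (fun ω' => hCh (S ω'))⟩
  have iA : Integrable (fun ω => μ1 (S ω) * h (S ω) - μ0 (S ω) * h (S ω)) P := i1.sub i0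
  have iB : Integrable (fun ω => T ω * Y ω * g1 (S ω) - T ω * μ1 (S ω) * g1 (S ω)) P :=
    iTY.sub iTμ
  have iC : Integrable
      (fun ω => (1 - T ω) * Y ω * g0 (S ω) - (1 - T ω) * μ0 (S ω) * g0 (S ω)) P :=
    iTY'.sub iTμ'
  have iAB : Integrable (fun ω => (μ1 (S ω) * h (S ω) - μ0 (S ω) * h (S ω))
      + (T ω * Y ω * g1 (S ω) - T ω * μ1 (S ω) * g1 (S ω))) P := iA.add iB
  have z1 : ∫ ω, T ω * Y ω * g1 (S ω) ∂P = ∫ ω, T ω * μ1 (S ω) * g1 (S ω) ∂P :=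
    hμ1mom g1 hg1m ⟨Ch * M, hg1b⟩
  have z0 : ∫ ω, (1 - T ω) * Y ω * g0 (S ω) ∂P = ∫ ω, (1 - T ω) * μ0 (S ω) * g0 (S ω) ∂P :=
    hμ0mom g0 hg0m ⟨Ch * M, hg0b⟩
  have rhs : ∫ ω, (Y1 ω - Y0 ω) * h (S ω) ∂P
      = ∫ ω, Y1 ω * h (S ω) ∂P - ∫ ω, Y0 ω * h (S ω) ∂P := by
    rw [← integral_sub iY1 iY0]
    refine integral_congr_ae (Filter.Eventually.of_forall fun ω => ?_)
    ring
  calc ∫ ω, (μ1 (S ω) + T ω * (Y ω - μ1 (S ω)) / π0 (S ω)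
          - μ0 (S ω) - (1 - T ω) * (Y ω - μ0 (S ω)) / (1 - π0 (S ω))) * h (S ω) ∂P
      = ∫ ω, ((μ1 (S ω) * h (S ω) - μ0 (S ω) * h (S ω))
          + (T ω * Y ω * g1 (S ω) - T ω * μ1 (S ω) * g1 (S ω))
          - ((1 - T ω) * Y ω * g0 (S ω) - (1 - T ω) * μ0 (S ω) * g0 (S ω))) ∂P :=
        integral_congr_ae hae
    _ = ∫ ω, ((μ1 (S ω) * h (S ω) - μ0 (S ω) * h (S ω))
          + (T ω * Y ω * g1 (S ω) - T ω * μ1 (S ω) * g1 (S ω))) ∂P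
        - ∫ ω, ((1 - T ω) * Y ω * g0 (S ω) - (1 - T ω) * μ0 (S ω) * g0 (S ω)) ∂P :=
        integral_sub iAB iC
    _ = (∫ ω, (μ1 (S ω) * h (S ω) - μ0 (S ω) * h (S ω)) ∂P
          + ∫ ω, (T ω * Y ω * g1 (S ω) - T ω * μ1 (S ω) * g1 (S ω)) ∂P)
        - ∫ ω, ((1 - T ω) * Y ω * g0 (S ω) - (1 - T ω) * μ0 (S ω) * g0 (S ω)) ∂P := by
        rw [integral_add iA iB]
    _ = ((∫ ω, μ1 (S ω) * h (S ω) ∂P - ∫ ω, μ0 (S ω) * h (S ω) ∂P)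
          + (∫ ω, T ω * Y ω * g1 (S ω) ∂P - ∫ ω, T ω * μ1 (S ω) * g1 (S ω) ∂P))
        - (∫ ω, (1 - T ω) * Y ω * g0 (S ω) ∂P
            - ∫ ω, (1 - T ω) * μ0 (S ω) * g0 (S ω) ∂P) := by
        rw [integral_sub i1 i0, integral_sub iTY iTμ, integral_sub iTY' iTμ']
    _ = ∫ ω, Y1 ω * h (S ω) ∂P - ∫ ω, Y0 ω * h (S ω) ∂P := by
        rw [z1, z0, hfin1, hfin0]
        ring
    _ = ∫ ω, (Y1 ω - Y0 ω) * h (S ω) ∂P := rhs.symm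
end

section
/- Under the stated dynamic treatment setup, the doubly robust pseudo-outcome Y^# := ν⁰(S̄₂) + T₂·(Y(1,1) − ν⁰(S̄₂))/ρ⁰(S̄₂) satisfies E[T₁ · Y^# · h(S₁)] = E[T₁ · μ⁰(S₁) · h(S₁)] for every bounded measurable h : ℝ^{d₁} → ℝ; equivalently, μ⁰(S₁) is a version of the conditional expectation of Y^# given σ(S₁) under the conditional probability measure P(· | T₁ = 1). -/
open MeasureTheory ProbabilityTheory

section Aux

lemma aux_bdd_mul {α : Type*} {f g : α → ℝ} (hf : ∃ C, ∀ x, |f x| ≤ C)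
    (hg : ∃ C, ∀ x, |g x| ≤ C) : ∃ C, ∀ x, |f x * g x| ≤ C := by
  obtain ⟨C, hC⟩ := hf; obtain ⟨D, hD⟩ := hg
  refine ⟨C * D, fun x => ?_⟩
  rw [abs_mul]
  exact mul_le_mul (hC x) (hD x) (abs_nonneg _) ((abs_nonneg _).trans (hC x))

lemma aux_intble {α : Type*} [MeasurableSpace α] {μ : Measure α} [IsFiniteMeasure μ] {f : α → ℝ}
    (hf : Measurable f) (hb : ∃ C, ∀ x, |f x| ≤ C) : Integrable f μ := by
  obtain ⟨C, hC⟩ := hb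
  exact (integrable_const C).mono' hf.aestronglyMeasurable
    (Filter.Eventually.of_forall fun x => by simpa [Real.norm_eq_abs] using hC x)

lemma aux_int_mul_condexp {α : Type*} {m0 : MeasurableSpace α} {μ : Measure α}
    [IsFiniteMeasure μ] {m : MeasurableSpace α} (hm : m ≤ m0) {W X : α → ℝ}
    (hW : Measurable[m] W) (hX : Integrable X μ)
    (hWX : Integrable (fun ω => W ω * X ω) μ) :
    ∫ ω, W ω * X ω ∂μ = ∫ ω, W ω * (μ[X|m]) ω ∂μ := by
  have hWX' : Integrable (W * X) μ := hWX
  have h := condExp_mul_of_stronglyMeasurable_left (μ := μ) hW.stronglyMeasurable hWX' hX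
  calc ∫ ω, W ω * X ω ∂μ = ∫ ω, (μ[W * X|m]) ω ∂μ := (integral_condExp hm).symm
    _ = ∫ ω, (W * (μ[X|m])) ω ∂μ := integral_congr_ae h
    _ = ∫ ω, W ω * (μ[X|m]) ω ∂μ := rfl

end Aux

/-- Doubly robust identification of the first-exposure outcome regression:
`μ⁰(S₁)` is the conditional mean of the doubly robust pseudo-outcome
`ν⁰(S̄₂) + T₂·(Y(1,1) − ν⁰(S̄₂))/ρ⁰(S̄₂)` given `S₁` within the group `T₁ = 1`. -/
theorem dte_pseudo_outcome_identification
    {Ω : Type*} [MeasurableSpace Ω] [StandardBorelSpace Ω] [Nonempty Ω]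
    (P : Measure Ω) [IsProbabilityMeasure P]
    (d₁ d₂ : ℕ)
    (S1 : Ω → (Fin d₁ → ℝ)) (hS1 : Measurable S1)
    (S2 : Ω → (Fin d₂ → ℝ)) (hS2 : Measurable S2)
    (T1 T2 : Ω → ℝ) (hT1 : Measurable T1) (hT2 : Measurable T2)
    (hT1_01 : ∀ ω, T1 ω = 0 ∨ T1 ω = 1) (hT2_01 : ∀ ω, T2 ω = 0 ∨ T2 ω = 1)
    (Y11 : Ω → ℝ) (hY11m : Measurable Y11) (hY11b : ∃ C, ∀ ω, |Y11 ω| ≤ C)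
    (Y : Ω → ℝ) (hYm : Measurable Y)
    (hcons : ∀ ω, T1 ω * T2 ω * Y ω = T1 ω * T2 ω * Y11 ω)
    (M : ℝ) (hM : 0 < M)
    (π0 : (Fin d₁ → ℝ) → ℝ) (ρ0 ν0 : (Fin d₁ → ℝ) × (Fin d₂ → ℝ) → ℝ)
    (μ0 : (Fin d₁ → ℝ) → ℝ)
    (hπ0m : Measurable π0) (hρ0m : Measurable ρ0) (hν0m : Measurable ν0) (hμ0m : Measurable μ0)
    (hπ0b : ∃ C, ∀ x, |π0 x| ≤ C) (hρ0b : ∃ C, ∀ x, |ρ0 x| ≤ C)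
    (hν0b : ∃ C, ∀ x, |ν0 x| ≤ C) (hμ0b : ∃ C, ∀ x, |μ0 x| ≤ C)
    (hπ0mom : ∀ h : (Fin d₁ → ℝ) → ℝ, Measurable h → (∃ C, ∀ x, |h x| ≤ C) →
      ∫ ω, T1 ω * h (S1 ω) ∂P = ∫ ω, π0 (S1 ω) * h (S1 ω) ∂P)
    (hρ0mom : ∀ h : (Fin d₁ → ℝ) × (Fin d₂ → ℝ) → ℝ, Measurable h → (∃ C, ∀ x, |h x| ≤ C) →
      ∫ ω, T1 ω * T2 ω * h (S1 ω, S2 ω) ∂P = ∫ ω, T1 ω * ρ0 (S1 ω, S2 ω) * h (S1 ω, S2 ω) ∂P)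
    (hν0mom : ∀ h : (Fin d₁ → ℝ) × (Fin d₂ → ℝ) → ℝ, Measurable h → (∃ C, ∀ x, |h x| ≤ C) →
      ∫ ω, T1 ω * T2 ω * Y11 ω * h (S1 ω, S2 ω) ∂P
        = ∫ ω, T1 ω * T2 ω * ν0 (S1 ω, S2 ω) * h (S1 ω, S2 ω) ∂P)
    (hμ0mom : ∀ h : (Fin d₁ → ℝ) → ℝ, Measurable h → (∃ C, ∀ x, |h x| ≤ C) →
      ∫ ω, T1 ω * Y11 ω * h (S1 ω) ∂P = ∫ ω, T1 ω * μ0 (S1 ω) * h (S1 ω) ∂P)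
    (hpos : ∀ᵐ ω ∂P, 1 / M ≤ π0 (S1 ω) ∧ 1 / M ≤ ρ0 (S1 ω, S2 ω))
    (hign1 : CondIndepFun (MeasurableSpace.comap S1 inferInstance) hS1.comap_le Y11 T1 P)
    (hign2 : CondIndepFun
      (MeasurableSpace.comap (fun ω => (S1 ω, S2 ω)) inferInstance)
      (Measurable.comap_le (hS1.prodMk hS2))
      Y11 T2 (P[|{ω | T1 ω = 1}])) :
    ∀ h : (Fin d₁ → ℝ) → ℝ, Measurable h → (∃ C, ∀ x, |h x| ≤ C) →
      ∫ ω, T1 ω * (ν0 (S1 ω, S2 ω)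
          + T2 ω * (Y11 ω - ν0 (S1 ω, S2 ω)) / ρ0 (S1 ω, S2 ω)) * h (S1 ω) ∂P
        = ∫ ω, T1 ω * μ0 (S1 ω) * h (S1 ω) ∂P := by
  intro g hg hgb
  have hMpos : (0:ℝ) < 1 / M := by positivity
  have hT2b : ∃ C, ∀ ω, |T2 ω| ≤ C := ⟨1, fun ω => by rcases hT2_01 ω with hω | hω <;> simp [hω]⟩
  have hS : Measurable fun ω => (S1 ω, S2 ω) := hS1.prodMk hS2
  have hρ0S : Measurable fun ω => ρ0 (S1 ω, S2 ω) := hρ0m.comp hS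
  have hρ0Sb : ∃ C, ∀ ω, |ρ0 (S1 ω, S2 ω)| ≤ C := hρ0b.imp fun C hC ω => hC _
  have hν0S : Measurable fun ω => ν0 (S1 ω, S2 ω) := hν0m.comp hS
  have hν0Sb : ∃ C, ∀ ω, |ν0 (S1 ω, S2 ω)| ≤ C := hν0b.imp fun C hC ω => hC _
  set A : Set Ω := {ω | T1 ω = 1} with hA_def
  have hA : MeasurableSet A := hT1 (measurableSet_singleton 1)
  have hT1ind : ∀ F : Ω → ℝ, ∀ ω, A.indicator F ω = T1 ω * F ω := by
    intro F ω
    rcases hT1_01 ω with hω | hω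
    · have hωA : ω ∉ A := by simp [hA_def, hω]
      simp [Set.indicator_of_notMem hωA, hω]
    · have hωA : ω ∈ A := hω
      simp [Set.indicator_of_mem hωA, hω]
  -- positivity of P A
  have h1 := hπ0mom (fun _ => 1) measurable_const ⟨1, fun _ => by norm_num⟩
  simp only [mul_one] at h1
  have hT1intA : ∫ ω, T1 ω ∂P = (P A).toReal := by
    have heq : ∀ ω, T1 ω = A.indicator (fun _ => (1:ℝ)) ω := fun ω => by
      rw [hT1ind]; ring
    rw [integral_congr_ae (Filter.Eventually.of_forall heq), integral_indicator_const _ hA]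
    simp
    rfl
  have hπlb : 1 / M ≤ ∫ ω, π0 (S1 ω) ∂P := by
    have hint : Integrable (fun ω => π0 (S1 ω)) P := aux_intble (hπ0m.comp hS1) (hπ0b.imp fun C hC ω => hC _)
    calc 1 / M = ∫ _ω, (1/M : ℝ) ∂P := by simp
      _ ≤ ∫ ω, π0 (S1 ω) ∂P := by
          refine integral_mono_ae (integrable_const _) hint ?_
          filter_upwards [hpos] with ω hω using hω.1
  have hPA_pos : 0 < (P A).toReal := by
    have h2 : 1 / M ≤ (P A).toReal := by rw [← hT1intA, h1]; exact hπlb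
    linarith
  have hPA0 : P A ≠ 0 := by
    intro h0
    rw [h0] at hPA_pos
    simp at hPA_pos
  have hPAne : (P A).toReal ≠ 0 := ne_of_gt hPA_pos
  set Q : Measure Ω := P[|A] with hQ_def
  haveI hQprob : IsProbabilityMeasure Q := cond_isProbabilityMeasure hPA0
  -- transfer of integrals
  have L1 : ∀ F : Ω → ℝ, ∫ ω, T1 ω * F ω ∂P = (P A).toReal * ∫ ω, F ω ∂Q := by
    intro F
    have h2 : ∫ ω, F ω ∂Q = (P A).toReal⁻¹ * ∫ ω in A, F ω ∂P := by
      rw [hQ_def, ProbabilityTheory.cond, integral_smul_measure, smul_eq_mul, ENNReal.toReal_inv]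
    have h3 : ∫ ω in A, F ω ∂P = ∫ ω, T1 ω * F ω ∂P := by
      rw [← integral_indicator hA]
      exact integral_congr_ae (Filter.Eventually.of_forall fun ω => hT1ind F ω)
    rw [h2, h3, ← mul_assoc, mul_inv_cancel₀ hPAne, one_mul]
  have hm : MeasurableSpace.comap (fun ω => (S1 ω, S2 ω)) inferInstance
      ≤ ‹MeasurableSpace Ω› := Measurable.comap_le hS
  have hSm : Measurable[MeasurableSpace.comap (fun ω => (S1 ω, S2 ω)) inferInstance]
      fun ω => (S1 ω, S2 ω) := Measurable.of_comap_le le_rfl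
  have hcompm : ∀ {k : (Fin d₁ → ℝ) × (Fin d₂ → ℝ) → ℝ}, Measurable k →
      Measurable[MeasurableSpace.comap (fun ω => (S1 ω, S2 ω)) inferInstance]
        fun ω => k (S1 ω, S2 ω) := fun hk => hk.comp hSm
  -- transferred moment condition for ρ0 under Q
  have Qmom : ∀ j : (Fin d₁ → ℝ) × (Fin d₂ → ℝ) → ℝ, Measurable j → (∃ C, ∀ x, |j x| ≤ C) →
      ∫ ω, T2 ω * j (S1 ω, S2 ω) ∂Q = ∫ ω, ρ0 (S1 ω, S2 ω) * j (S1 ω, S2 ω) ∂Q := by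
    intro j hj hjb
    apply mul_left_cancel₀ hPAne
    calc (P A).toReal * ∫ ω, T2 ω * j (S1 ω, S2 ω) ∂Q
        = ∫ ω, T1 ω * (T2 ω * j (S1 ω, S2 ω)) ∂P :=
          (L1 fun ω => T2 ω * j (S1 ω, S2 ω)).symm
      _ = ∫ ω, T1 ω * T2 ω * j (S1 ω, S2 ω) ∂P :=
          integral_congr_ae (Filter.Eventually.of_forall fun ω => by ring)
      _ = ∫ ω, T1 ω * ρ0 (S1 ω, S2 ω) * j (S1 ω, S2 ω) ∂P := hρ0mom j hj hjb
      _ = ∫ ω, T1 ω * (ρ0 (S1 ω, S2 ω) * j (S1 ω, S2 ω)) ∂P :=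
          integral_congr_ae (Filter.Eventually.of_forall fun ω => by ring)
      _ = (P A).toReal * ∫ ω, ρ0 (S1 ω, S2 ω) * j (S1 ω, S2 ω) ∂Q :=
          L1 fun ω => ρ0 (S1 ω, S2 ω) * j (S1 ω, S2 ω)
  -- identification of the conditional mean of T2 given S̄₂ under Q
  have hQT2 : (fun ω => ρ0 (S1 ω, S2 ω)) =ᵐ[Q] Q[T2|MeasurableSpace.comap (fun ω' => (S1 ω', S2 ω')) inferInstance] := by
    refine ae_eq_condExp_of_forall_setIntegral_eq hm (aux_intble hT2 hT2b)
      (fun s _ _ => (aux_intble hρ0S hρ0Sb).integrableOn)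
      (fun s hs _ => ?_) ((hcompm hρ0m).stronglyMeasurable.aestronglyMeasurable)
    obtain ⟨s', hs', rfl⟩ := MeasurableSpace.measurableSet_comap.mp hs
    have hpre : MeasurableSet ((fun ω => (S1 ω, S2 ω)) ⁻¹' s') := hS hs'
    rw [← integral_indicator hpre, ← integral_indicator hpre]
    have hind : ∀ ω, ((fun ω => (S1 ω, S2 ω)) ⁻¹' s').indicator
        (fun ω => ρ0 (S1 ω, S2 ω)) ω
        = ρ0 (S1 ω, S2 ω) * s'.indicator (fun _ => (1:ℝ)) (S1 ω, S2 ω) := by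
      intro ω
      by_cases hω : (S1 ω, S2 ω) ∈ s' <;>
        simp [Set.indicator_apply, hω, Set.mem_preimage]
    have hind2 : ∀ ω, ((fun ω => (S1 ω, S2 ω)) ⁻¹' s').indicator T2 ω
        = T2 ω * s'.indicator (fun _ => (1:ℝ)) (S1 ω, S2 ω) := by
      intro ω
      by_cases hω : (S1 ω, S2 ω) ∈ s' <;>
        simp [Set.indicator_apply, hω, Set.mem_preimage]
    rw [integral_congr_ae (Filter.Eventually.of_forall hind),
      integral_congr_ae (Filter.Eventually.of_forall hind2)]
    exact (Qmom _ (measurable_const.indicator hs')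
      ⟨1, fun x => by by_cases hx : x ∈ s' <;> simp [Set.indicator_apply, hx]⟩).symm
  -- conditional independence product rule
  have hprod := (condIndepFun_iff_condExp_inter_preimage_eq_mul (μ := Q) hY11m hT2).mp hign2
  have hindT2 : (T2 ⁻¹' {1}).indicator (fun _ => (1:ℝ)) = T2 := by
    funext ω
    rcases hT2_01 ω with hω | hω <;>
      simp [Set.indicator_apply, Set.mem_preimage, hω]
  -- the key ignorability identity
  have KEYP : ∀ j : (Fin d₁ → ℝ) × (Fin d₂ → ℝ) → ℝ, Measurable j → (∃ C, ∀ x, |j x| ≤ C) →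
      ∫ ω, T1 ω * (T2 ω * (Y11 ω * j (S1 ω, S2 ω))) ∂P
        = ∫ ω, T1 ω * (ρ0 (S1 ω, S2 ω) * (Y11 ω * j (S1 ω, S2 ω))) ∂P := by
    intro j hj hjb
    have hjS : Measurable fun ω => j (S1 ω, S2 ω) := hj.comp hS
    have hjSb : ∃ C, ∀ ω, |j (S1 ω, S2 ω)| ≤ C := hjb.imp fun C hC ω => hC _
    set F : Ω → ℝ := fun ω => T2 ω * j (S1 ω, S2 ω) - ρ0 (S1 ω, S2 ω) * j (S1 ω, S2 ω)
      with hF_def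
    have hFm : Measurable F := (hT2.mul hjS).sub (hρ0S.mul hjS)
    have hFb : ∃ C, ∀ ω, |F ω| ≤ C := by
      obtain ⟨C1, hb1⟩ := aux_bdd_mul hT2b hjSb
      obtain ⟨C2, hb2⟩ := aux_bdd_mul hρ0Sb hjSb
      exact ⟨C1 + C2, fun ω => (abs_sub _ _).trans (add_le_add (hb1 ω) (hb2 ω))⟩
    have hFint : Integrable F Q := aux_intble hFm hFb
    have KEY_s : ∀ s : Set ℝ, MeasurableSet s →
        ∫ ω, (Y11 ⁻¹' s).indicator (fun _ => (1:ℝ)) ω * F ω ∂Q = 0 := by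
      intro s hs
      have hIsm : Measurable ((Y11 ⁻¹' s).indicator (fun _ => (1:ℝ))) :=
        measurable_const.indicator (hY11m hs)
      have hIsb : ∀ ω, |(Y11 ⁻¹' s).indicator (fun _ => (1:ℝ)) ω| ≤ 1 := fun ω => by
        by_cases hω : ω ∈ Y11 ⁻¹' s <;> simp [Set.indicator_apply, hω]
      have hIDm : Measurable ((Y11 ⁻¹' s ∩ T2 ⁻¹' {1}).indicator (fun _ => (1:ℝ))) :=
        measurable_const.indicator ((hY11m hs).inter (hT2 (measurableSet_singleton 1)))
      have hIDb : ∀ ω, |(Y11 ⁻¹' s ∩ T2 ⁻¹' {1}).indicator (fun _ => (1:ℝ)) ω| ≤ 1 := fun ω => by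
        by_cases hω : ω ∈ Y11 ⁻¹' s ∩ T2 ⁻¹' {1} <;> simp [Set.indicator_apply, hω]
      have hID : ∀ ω, (Y11 ⁻¹' s).indicator (fun _ => (1:ℝ)) ω * T2 ω
          = (Y11 ⁻¹' s ∩ T2 ⁻¹' {1}).indicator (fun _ => (1:ℝ)) ω := by
        intro ω
        rcases hT2_01 ω with h2 | h2 <;> by_cases hy : ω ∈ Y11 ⁻¹' s <;>
          simp [Set.indicator_apply, hy, h2, Set.mem_inter_iff, Set.mem_preimage]
      have stepA : ∫ ω, (Y11 ⁻¹' s).indicator (fun _ => (1:ℝ)) ω * (T2 ω * j (S1 ω, S2 ω)) ∂Q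
          = ∫ ω, (Y11 ⁻¹' s).indicator (fun _ => (1:ℝ)) ω
              * (ρ0 (S1 ω, S2 ω) * j (S1 ω, S2 ω)) ∂Q := by
        calc ∫ ω, (Y11 ⁻¹' s).indicator (fun _ => (1:ℝ)) ω * (T2 ω * j (S1 ω, S2 ω)) ∂Q
            = ∫ ω, j (S1 ω, S2 ω)
                * (Y11 ⁻¹' s ∩ T2 ⁻¹' {1}).indicator (fun _ => (1:ℝ)) ω ∂Q :=
              integral_congr_ae (Filter.Eventually.of_forall fun ω => by
                simp only [← hID ω]; ring)
          _ = ∫ ω, j (S1 ω, S2 ω)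
                * (Q[(Y11 ⁻¹' s ∩ T2 ⁻¹' {1}).indicator (fun _ => (1:ℝ))|MeasurableSpace.comap (fun ω' => (S1 ω', S2 ω')) inferInstance]) ω ∂Q :=
              aux_int_mul_condexp hm (hcompm hj) (aux_intble hIDm ⟨1, hIDb⟩)
                (aux_intble (hjS.mul hIDm) (aux_bdd_mul hjSb ⟨1, hIDb⟩))
          _ = ∫ ω, j (S1 ω, S2 ω)
                * ((Q[(Y11 ⁻¹' s).indicator (fun _ => (1:ℝ))|MeasurableSpace.comap (fun ω' => (S1 ω', S2 ω')) inferInstance]) ω * (Q[T2|MeasurableSpace.comap (fun ω' => (S1 ω', S2 ω')) inferInstance]) ω) ∂Q := by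
              refine integral_congr_ae ?_
              have hp := hprod s {1} hs (measurableSet_singleton 1)
              rw [hindT2] at hp
              filter_upwards [hp] with ω hω
              rw [hω]
          _ = ∫ ω, j (S1 ω, S2 ω)
                * ((Q[(Y11 ⁻¹' s).indicator (fun _ => (1:ℝ))|MeasurableSpace.comap (fun ω' => (S1 ω', S2 ω')) inferInstance]) ω * ρ0 (S1 ω, S2 ω)) ∂Q := by
              refine integral_congr_ae ?_
              filter_upwards [hQT2] with ω hω
              rw [← hω]
          _ = ∫ ω, (ρ0 (S1 ω, S2 ω) * j (S1 ω, S2 ω))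
                * (Q[(Y11 ⁻¹' s).indicator (fun _ => (1:ℝ))|MeasurableSpace.comap (fun ω' => (S1 ω', S2 ω')) inferInstance]) ω ∂Q :=
              integral_congr_ae (Filter.Eventually.of_forall fun ω => by ring)
          _ = ∫ ω, (ρ0 (S1 ω, S2 ω) * j (S1 ω, S2 ω))
                * (Y11 ⁻¹' s).indicator (fun _ => (1:ℝ)) ω ∂Q :=
              (aux_int_mul_condexp hm ((hcompm hρ0m).mul (hcompm hj))
                (aux_intble hIsm ⟨1, hIsb⟩)
                (aux_intble ((hρ0S.mul hjS).mul hIsm)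
                  (aux_bdd_mul (aux_bdd_mul hρ0Sb hjSb) ⟨1, hIsb⟩))).symm
          _ = ∫ ω, (Y11 ⁻¹' s).indicator (fun _ => (1:ℝ)) ω
                * (ρ0 (S1 ω, S2 ω) * j (S1 ω, S2 ω)) ∂Q :=
              integral_congr_ae (Filter.Eventually.of_forall fun ω => by ring)
      have e1 : ∫ ω, (Y11 ⁻¹' s).indicator (fun _ => (1:ℝ)) ω * F ω ∂Q
          = ∫ ω, (Y11 ⁻¹' s).indicator (fun _ => (1:ℝ)) ω * (T2 ω * j (S1 ω, S2 ω)) ∂Q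
            - ∫ ω, (Y11 ⁻¹' s).indicator (fun _ => (1:ℝ)) ω
                * (ρ0 (S1 ω, S2 ω) * j (S1 ω, S2 ω)) ∂Q := by
        rw [← integral_sub (aux_intble (hIsm.fun_mul (hT2.fun_mul hjS))
            (aux_bdd_mul ⟨1, hIsb⟩ (aux_bdd_mul hT2b hjSb)))
          (aux_intble (hIsm.fun_mul (hρ0S.fun_mul hjS))
            (aux_bdd_mul ⟨1, hIsb⟩ (aux_bdd_mul hρ0Sb hjSb)))]
        refine integral_congr_ae (Filter.Eventually.of_forall fun ω => ?_)
        simp only [hF_def]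
        ring
      rw [e1, stepA, sub_self]
    -- conditional expectation of F given σ(Y11) vanishes
    have hF0 : (fun _ => (0:ℝ)) =ᵐ[Q] Q[F|MeasurableSpace.comap Y11 inferInstance] := by
      refine ae_eq_condExp_of_forall_setIntegral_eq hY11m.comap_le hFint
        (fun s _ _ => (integrable_zero _ _ _).integrableOn)
        (fun s hs _ => ?_) stronglyMeasurable_const.aestronglyMeasurable
      obtain ⟨s', hs', rfl⟩ := MeasurableSpace.measurableSet_comap.mp hs
      have hrw : ∫ x in Y11 ⁻¹' s', F x ∂Q
          = ∫ ω, (Y11 ⁻¹' s').indicator (fun _ => (1:ℝ)) ω * F ω ∂Q := by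
        rw [← integral_indicator (hY11m hs')]
        refine integral_congr_ae (Filter.Eventually.of_forall fun ω => ?_)
        by_cases hω : ω ∈ Y11 ⁻¹' s' <;> simp [Set.indicator_apply, hω]
      rw [hrw, KEY_s s' hs']
      simp
    have hY11mY : Measurable[MeasurableSpace.comap Y11 inferInstance] Y11 :=
      Measurable.of_comap_le le_rfl
    have hzero : ∫ ω, Y11 ω * F ω ∂Q = 0 := by
      rw [aux_int_mul_condexp hY11m.comap_le hY11mY hFint
        (aux_intble (hY11m.mul hFm) (aux_bdd_mul hY11b hFb))]
      refine Eq.trans (integral_congr_ae ?_) (integral_zero _ _)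
      filter_upwards [hF0] with ω hω
      rw [← hω, mul_zero]
    have hQfinal : ∫ ω, T2 ω * (Y11 ω * j (S1 ω, S2 ω)) ∂Q
        = ∫ ω, ρ0 (S1 ω, S2 ω) * (Y11 ω * j (S1 ω, S2 ω)) ∂Q := by
      have h2 : ∫ ω, Y11 ω * F ω ∂Q
          = ∫ ω, T2 ω * (Y11 ω * j (S1 ω, S2 ω)) ∂Q
            - ∫ ω, ρ0 (S1 ω, S2 ω) * (Y11 ω * j (S1 ω, S2 ω)) ∂Q := by
        rw [← integral_sub (aux_intble (hT2.fun_mul (hY11m.fun_mul hjS))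
            (aux_bdd_mul hT2b (aux_bdd_mul hY11b hjSb)))
          (aux_intble (hρ0S.fun_mul (hY11m.fun_mul hjS))
            (aux_bdd_mul hρ0Sb (aux_bdd_mul hY11b hjSb)))]
        refine integral_congr_ae (Filter.Eventually.of_forall fun ω => ?_)
        simp only [hF_def]
        ring
      rw [h2] at hzero
      linarith
    calc ∫ ω, T1 ω * (T2 ω * (Y11 ω * j (S1 ω, S2 ω))) ∂P
        = (P A).toReal * ∫ ω, T2 ω * (Y11 ω * j (S1 ω, S2 ω)) ∂Q :=
          L1 fun ω => T2 ω * (Y11 ω * j (S1 ω, S2 ω))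
      _ = (P A).toReal * ∫ ω, ρ0 (S1 ω, S2 ω) * (Y11 ω * j (S1 ω, S2 ω)) ∂Q := by
          rw [hQfinal]
      _ = ∫ ω, T1 ω * (ρ0 (S1 ω, S2 ω) * (Y11 ω * j (S1 ω, S2 ω))) ∂P :=
          (L1 fun ω => ρ0 (S1 ω, S2 ω) * (Y11 ω * j (S1 ω, S2 ω))).symm
  -- now the main computation
  set j : (Fin d₁ → ℝ) × (Fin d₂ → ℝ) → ℝ := fun x => g x.1 / max (ρ0 x) (1/M) with hj_def
  have hmax_pos : ∀ x, 0 < max (ρ0 x) (1/M) := fun x => lt_of_lt_of_le hMpos (le_max_right _ _)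
  have hjm : Measurable j := (hg.comp measurable_fst).div (hρ0m.max measurable_const)
  have hjb : ∃ C, ∀ x, |j x| ≤ C := by
    obtain ⟨C, hC⟩ := hgb
    refine ⟨C * M, fun x => ?_⟩
    have hCpos : 0 ≤ C := (abs_nonneg _).trans (hC x.1)
    rw [hj_def]
    simp only []
    rw [abs_div, abs_of_pos (hmax_pos x), div_le_iff₀ (hmax_pos x)]
    calc |g x.1| ≤ C := hC _
      _ = C * M * (1/M) := by field_simp
      _ ≤ C * M * max (ρ0 x) (1/M) :=
          mul_le_mul_of_nonneg_left (le_max_right _ _)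
            (mul_nonneg hCpos (le_of_lt hM))
  have hjS : Measurable fun ω => j (S1 ω, S2 ω) := hjm.comp hS
  have hjSb : ∃ C, ∀ ω, |j (S1 ω, S2 ω)| ≤ C := hjb.imp fun C hC ω => hC _
  have hgS : Measurable fun ω => g (S1 ω) := hg.comp hS1
  have hgSb : ∃ C, ∀ ω, |g (S1 ω)| ≤ C := hgb.imp fun C hC ω => hC _
  have hf1int : Integrable (fun ω => T1 ω * ν0 (S1 ω, S2 ω) * g (S1 ω)) P :=
    aux_intble ((hT1.mul hν0S).mul hgS)
      (aux_bdd_mul (aux_bdd_mul ⟨1, fun ω => by rcases hT1_01 ω with hω | hω <;> simp [hω]⟩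
        hν0Sb) hgSb)
  have hf2int : Integrable (fun ω => T1 ω * (T2 ω * (Y11 ω * j (S1 ω, S2 ω)))) P :=
    aux_intble (hT1.mul (hT2.mul (hY11m.mul hjS)))
      (aux_bdd_mul ⟨1, fun ω => by rcases hT1_01 ω with hω | hω <;> simp [hω]⟩
        (aux_bdd_mul hT2b (aux_bdd_mul hY11b hjSb)))
  have hf3int : Integrable (fun ω => T1 ω * T2 ω * (ν0 (S1 ω, S2 ω) * j (S1 ω, S2 ω))) P :=
    aux_intble ((hT1.mul hT2).mul (hν0S.mul hjS))
      (aux_bdd_mul (aux_bdd_mul ⟨1, fun ω => by rcases hT1_01 ω with hω | hω <;> simp [hω]⟩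
        hT2b) (aux_bdd_mul hν0Sb hjSb))
  have hsplit : ∫ ω, T1 ω * (ν0 (S1 ω, S2 ω)
      + T2 ω * (Y11 ω - ν0 (S1 ω, S2 ω)) / ρ0 (S1 ω, S2 ω)) * g (S1 ω) ∂P
      = ∫ ω, T1 ω * ν0 (S1 ω, S2 ω) * g (S1 ω) ∂P
        + (∫ ω, T1 ω * (T2 ω * (Y11 ω * j (S1 ω, S2 ω))) ∂P
          - ∫ ω, T1 ω * T2 ω * (ν0 (S1 ω, S2 ω) * j (S1 ω, S2 ω)) ∂P) := by
    have hf23 : Integrable (fun ω => T1 ω * (T2 ω * (Y11 ω * j (S1 ω, S2 ω)))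
        - T1 ω * T2 ω * (ν0 (S1 ω, S2 ω) * j (S1 ω, S2 ω))) P := hf2int.sub hf3int
    rw [← integral_sub hf2int hf3int, ← integral_add hf1int hf23]
    refine integral_congr_ae ?_
    filter_upwards [hpos] with ω hω
    have hρpos : 0 < ρ0 (S1 ω, S2 ω) := lt_of_lt_of_le hMpos hω.2
    have hρne : ρ0 (S1 ω, S2 ω) ≠ 0 := ne_of_gt hρpos
    have hmaxeq : max (ρ0 (S1 ω, S2 ω)) (1/M) = ρ0 (S1 ω, S2 ω) := max_eq_left hω.2
    simp only [hj_def, hmaxeq]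
    field_simp
  have e3 : ∫ ω, T1 ω * T2 ω * (ν0 (S1 ω, S2 ω) * j (S1 ω, S2 ω)) ∂P
      = ∫ ω, T1 ω * ν0 (S1 ω, S2 ω) * g (S1 ω) ∂P := by
    calc ∫ ω, T1 ω * T2 ω * (ν0 (S1 ω, S2 ω) * j (S1 ω, S2 ω)) ∂P
        = ∫ ω, T1 ω * ρ0 (S1 ω, S2 ω) * (ν0 (S1 ω, S2 ω) * j (S1 ω, S2 ω)) ∂P :=
          hρ0mom (fun x => ν0 x * j x) (hν0m.mul hjm) (aux_bdd_mul hν0b hjb)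
      _ = ∫ ω, T1 ω * ν0 (S1 ω, S2 ω) * g (S1 ω) ∂P := by
          refine integral_congr_ae ?_
          filter_upwards [hpos] with ω hω
          have hρpos : 0 < ρ0 (S1 ω, S2 ω) := lt_of_lt_of_le hMpos hω.2
          have hρne : ρ0 (S1 ω, S2 ω) ≠ 0 := ne_of_gt hρpos
          have hmaxeq : max (ρ0 (S1 ω, S2 ω)) (1/M) = ρ0 (S1 ω, S2 ω) := max_eq_left hω.2
          simp only [hj_def, hmaxeq]
          field_simp
  have e2 : ∫ ω, T1 ω * (T2 ω * (Y11 ω * j (S1 ω, S2 ω))) ∂P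
      = ∫ ω, T1 ω * μ0 (S1 ω) * g (S1 ω) ∂P := by
    calc ∫ ω, T1 ω * (T2 ω * (Y11 ω * j (S1 ω, S2 ω))) ∂P
        = ∫ ω, T1 ω * (ρ0 (S1 ω, S2 ω) * (Y11 ω * j (S1 ω, S2 ω))) ∂P := KEYP j hjm hjb
      _ = ∫ ω, T1 ω * Y11 ω * g (S1 ω) ∂P := by
          refine integral_congr_ae ?_
          filter_upwards [hpos] with ω hω
          have hρpos : 0 < ρ0 (S1 ω, S2 ω) := lt_of_lt_of_le hMpos hω.2
          have hρne : ρ0 (S1 ω, S2 ω) ≠ 0 := ne_of_gt hρpos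
          have hmaxeq : max (ρ0 (S1 ω, S2 ω)) (1/M) = ρ0 (S1 ω, S2 ω) := max_eq_left hω.2
          simp only [hj_def, hmaxeq]
          field_simp
      _ = ∫ ω, T1 ω * μ0 (S1 ω) * g (S1 ω) ∂P := hμ0mom g hg hgb
  rw [hsplit, e2, e3]
  ring
end

section
/- Under the stated dynamic treatment setup, E[T₁ · ν⁰(S̄₂) · h(S₁)] = E[T₁ · μ⁰(S₁) · h(S₁)] for every bounded measurable h : ℝ^{d₁} → ℝ; equivalently, μ⁰(S₁) is a version of the conditional expectation of ν⁰(S̄₂) given σ(S₁) under the conditional probability measure P(· | T₁ = 1). -/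
open MeasureTheory ProbabilityTheory Filter Set

section Aux

variable {Ω : Type*} {mΩ : MeasurableSpace Ω} {Q : Measure Ω} [IsProbabilityMeasure Q]

lemma aux_integrable {f : Ω → ℝ} (hf : AEStronglyMeasurable f Q) (hb : ∃ C, ∀ ω, |f ω| ≤ C) :
    Integrable f Q := by
  obtain ⟨C, hC⟩ := hb
  exact (integrable_const C).mono' hf (Eventually.of_forall fun ω => by
    simpa [Real.norm_eq_abs] using hC ω)

/-- pull-out: `∫ k·X = ∫ k·E[X|m]` for bounded `m`-measurable `k`. -/
lemma aux_pull {m : MeasurableSpace Ω} (hm : m ≤ mΩ) {k X : Ω → ℝ}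
    (hk : StronglyMeasurable[m] k) (hkb : ∃ C, ∀ ω, |k ω| ≤ C)
    (hX : Integrable X Q) :
    ∫ ω, k ω * X ω ∂Q = ∫ ω, k ω * (Q[X | m]) ω ∂Q := by
  have hkm : AEStronglyMeasurable[mΩ] k Q := (hk.mono hm).aestronglyMeasurable
  have hkb' : ∃ C, ∀ ω, ‖k ω‖ ≤ C := by simpa [Real.norm_eq_abs] using hkb
  have hint : Integrable (fun ω => k ω * X ω) Q := by
    obtain ⟨C, hC⟩ := hkb'; exact hX.bdd_mul hkm (ae_of_all _ hC)
  have h1 : Q[(fun ω => k ω * X ω)|m] =ᵐ[Q] fun ω => k ω * (Q[X|m]) ω := by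
    have := condExp_mul_of_stronglyMeasurable_left (μ := Q) hk (g := X) ?_ hX
    · exact this
    · exact hint
  calc ∫ ω, k ω * X ω ∂Q = ∫ ω, (Q[(fun ω => k ω * X ω)|m]) ω ∂Q :=
        (integral_condExp hm).symm
    _ = ∫ ω, k ω * (Q[X|m]) ω ∂Q := integral_congr_ae h1

/-- If `∫ 1_s(Y)·W₁ = ∫ 1_s(Y)·W₂` for all Borel `s`, the same holds with any bounded
measurable `φ` in place of the indicator. -/
lemma aux_ext {Y : Ω → ℝ} (hY : Measurable Y) {W₁ W₂ : Ω → ℝ}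
    (hW₁ : Integrable W₁ Q) (hW₂ : Integrable W₂ Q)
    (hind : ∀ s : Set ℝ, MeasurableSet s →
      ∫ ω, s.indicator (fun _ => (1:ℝ)) (Y ω) * W₁ ω ∂Q
        = ∫ ω, s.indicator (fun _ => (1:ℝ)) (Y ω) * W₂ ω ∂Q)
    {φ : ℝ → ℝ} (hφ : Measurable φ) (hφb : ∃ C, ∀ x, |φ x| ≤ C) :
    ∫ ω, φ (Y ω) * W₁ ω ∂Q = ∫ ω, φ (Y ω) * W₂ ω ∂Q := by
  -- integrability of bounded composition times W
  have hIW : ∀ (W : Ω → ℝ), Integrable W Q → ∀ (ψ : ℝ → ℝ), Measurable ψ →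
      (∃ C, ∀ x, |ψ x| ≤ C) → Integrable (fun ω => ψ (Y ω) * W ω) Q := by
    intro W hW ψ hψ ⟨C, hC⟩
    exact hW.bdd_mul ((hψ.comp hY).aestronglyMeasurable)
      (c := C) (ae_of_all _ fun ω => by simpa [Real.norm_eq_abs] using hC (Y ω))
  -- step 1: simple functions
  have hsimple : ∀ ψ : SimpleFunc ℝ ℝ,
      ∫ ω, ψ (Y ω) * W₁ ω ∂Q = ∫ ω, ψ (Y ω) * W₂ ω ∂Q := by
    intro ψ
    induction ψ using SimpleFunc.induction with
    | const c hs =>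
      rename_i s
      have hpt : ∀ (W : Ω → ℝ) ω,
          (SimpleFunc.piecewise s hs (SimpleFunc.const ℝ c) (SimpleFunc.const ℝ 0)) (Y ω) * W ω
            = c * (s.indicator (fun _ => (1:ℝ)) (Y ω) * W ω) := by
        intro W ω
        by_cases h : Y ω ∈ s <;>
          simp [SimpleFunc.piecewise_apply, Set.indicator_apply, h, mul_assoc]
      simp only [hpt]
      rw [integral_const_mul, integral_const_mul, hind s hs]
    | add hdisj ihf ihg =>
      rename_i f g
      have hbdd : ∀ (ψ : SimpleFunc ℝ ℝ), ∃ C, ∀ x, |ψ x| ≤ C := by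
        intro ψ
        obtain ⟨C, hC⟩ := (ψ.range.image (fun x => |x|)).exists_le
        exact ⟨C, fun x => hC _ (Finset.mem_image_of_mem _ (ψ.mem_range_self x))⟩
      have h1 : ∀ (W : Ω → ℝ) (hW : Integrable W Q) (ψ : SimpleFunc ℝ ℝ),
          Integrable (fun ω => ψ (Y ω) * W ω) Q :=
        fun W hW ψ => hIW W hW ψ ψ.measurable (hbdd ψ)
      have hadd : ∀ (W : Ω → ℝ), (∀ ω, (f + g) (Y ω) * W ω
          = f (Y ω) * W ω + g (Y ω) * W ω) := by
        intro W ω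
        simp [add_mul]
      simp only [hadd]
      rw [integral_add (h1 W₁ hW₁ f) (h1 W₁ hW₁ g), integral_add (h1 W₂ hW₂ f) (h1 W₂ hW₂ g),
        ihf, ihg]
  -- step 2: approximation
  obtain ⟨C, hC⟩ := hφb
  have h0 : (0:ℝ) ∈ (Set.univ : Set ℝ) := Set.mem_univ 0
  set φn := fun n => SimpleFunc.approxOn φ hφ Set.univ 0 h0 n with hφn
  have hlim : ∀ x, Tendsto (fun n => φn n x) atTop (nhds (φ x)) := fun x =>
    SimpleFunc.tendsto_approxOn hφ h0 (by simp)
  have hbd : ∀ n x, ‖φn n x‖ ≤ C + C := by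
    intro n x
    refine (SimpleFunc.norm_approxOn_zero_le hφ h0 x n).trans ?_
    have := hC x
    have : ‖φ x‖ ≤ C := by simpa [Real.norm_eq_abs] using hC x
    linarith
  have htend : ∀ (W : Ω → ℝ), Integrable W Q →
      Tendsto (fun n => ∫ ω, φn n (Y ω) * W ω ∂Q) atTop (nhds (∫ ω, φ (Y ω) * W ω ∂Q)) := by
    intro W hW
    refine tendsto_integral_of_dominated_convergence (fun ω => (C + C) * |W ω|) ?_ ?_ ?_ ?_
    · exact fun n => (((φn n).measurable.comp hY).aestronglyMeasurable).mul hW.1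
    · exact hW.abs.const_mul _
    · intro n
      refine Eventually.of_forall fun ω => ?_
      calc ‖φn n (Y ω) * W ω‖ = ‖φn n (Y ω)‖ * |W ω| := by
            rw [norm_mul, Real.norm_eq_abs (W ω)]
        _ ≤ (C + C) * |W ω| := mul_le_mul_of_nonneg_right (hbd n (Y ω)) (abs_nonneg _)
    · exact Eventually.of_forall fun ω => ((hlim (Y ω)).mul tendsto_const_nhds)
  have h1 := htend W₁ hW₁
  have h2 := htend W₂ hW₂
  have heq : (fun n => ∫ ω, φn n (Y ω) * W₁ ω ∂Q)
      = fun n => ∫ ω, φn n (Y ω) * W₂ ω ∂Q := funext fun n => hsimple (φn n)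
  rw [heq] at h1
  exact tendsto_nhds_unique h1 h2

/-- If a `σ(f)`-measurable integrable `F` integrates to zero against all bounded
measurable functions of `f`, then `F = 0` a.e. -/
lemma aux_zero {β : Type*} [MeasurableSpace β] {f : Ω → β} {F : Ω → ℝ}
    (hFm : Measurable[MeasurableSpace.comap f inferInstance] F) (hFi : Integrable F Q)
    (hz : ∀ g : β → ℝ, Measurable g → (∃ C, ∀ x, |g x| ≤ C) →
      ∫ ω, F ω * g (f ω) ∂Q = 0) :
    F =ᵐ[Q] 0 := by
  have hbnd : ∀ B : Set β, ∃ C, ∀ x, |B.indicator (fun _ => (1:ℝ)) x| ≤ C := by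
    intro B
    refine ⟨1, fun x => ?_⟩
    by_cases h : x ∈ B <;> simp [Set.indicator_apply, h]
  -- positive part
  obtain ⟨B₁, hB₁, hB₁eq⟩ := hFm (measurableSet_Ioi (a := (0:ℝ)))
  have hm₁ : Measurable (B₁.indicator (fun _ => (1:ℝ))) := measurable_const.indicator hB₁
  have h₁ := hz _ hm₁ (hbnd B₁)
  have hpt₁ : ∀ ω, F ω * B₁.indicator (fun _ => (1:ℝ)) (f ω) = max (F ω) 0 := by
    intro ω
    have hmem : f ω ∈ B₁ ↔ 0 < F ω := by
      constructor
      · intro h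
        have : ω ∈ F ⁻¹' Set.Ioi 0 := by rw [← hB₁eq]; exact h
        exact this
      · intro h
        have : ω ∈ f ⁻¹' B₁ := by rw [hB₁eq]; exact h
        exact this
    by_cases h : 0 < F ω
    · rw [Set.indicator_of_mem (hmem.mpr h), mul_one, max_eq_left h.le]
    · rw [Set.indicator_of_notMem (fun hh => h (hmem.mp hh)), mul_zero,
        max_eq_right (not_lt.mp h)]
  rw [integral_congr_ae (Eventually.of_forall hpt₁)] at h₁
  have hmax : (fun ω => max (F ω) 0) =ᵐ[Q] 0 :=
    (integral_eq_zero_iff_of_nonneg (fun ω => le_max_right _ _) hFi.pos_part).mp h₁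
  -- negative part
  obtain ⟨B₂, hB₂, hB₂eq⟩ := hFm (measurableSet_Iio (a := (0:ℝ)))
  have hm₂ : Measurable (B₂.indicator (fun _ => (1:ℝ))) := measurable_const.indicator hB₂
  have h₂ := hz _ hm₂ (hbnd B₂)
  have hpt₂ : ∀ ω, -(F ω * B₂.indicator (fun _ => (1:ℝ)) (f ω)) = max (-F ω) 0 := by
    intro ω
    have hmem : f ω ∈ B₂ ↔ F ω < 0 := by
      constructor
      · intro h
        have : ω ∈ F ⁻¹' Set.Iio 0 := by rw [← hB₂eq]; exact h
        exact this
      · intro h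
        have : ω ∈ f ⁻¹' B₂ := by rw [hB₂eq]; exact h
        exact this
    by_cases h : F ω < 0
    · rw [Set.indicator_of_mem (hmem.mpr h), mul_one, max_eq_left (by linarith)]
    · rw [Set.indicator_of_notMem (fun hh => h (hmem.mp hh)), mul_zero, neg_zero,
        max_eq_right (by linarith [not_lt.mp h])]
  have h₂' : ∫ ω, max (-F ω) 0 ∂Q = 0 := by
    rw [integral_congr_ae (Eventually.of_forall fun ω => (hpt₂ ω).symm), integral_neg, h₂, neg_zero]
  have hmin : (fun ω => max (-F ω) 0) =ᵐ[Q] 0 :=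
    (integral_eq_zero_iff_of_nonneg (fun ω => le_max_right _ _) hFi.neg.pos_part).mp h₂'
  filter_upwards [hmax, hmin] with ω h1 h2
  simp only [Pi.zero_apply] at h1 h2 ⊢
  have hA : F ω ≤ 0 := h1 ▸ le_max_left _ _
  have hB : -F ω ≤ 0 := h2 ▸ le_max_left _ _
  linarith

end Aux


/-- Tower property for the dynamic nuisance functions: `μ⁰(S₁)` is the
conditional mean of `ν⁰(S̄₂)` given `S₁` within the group `T₁ = 1`. -/
theorem dte_tower_identification
    {Ω : Type*} [MeasurableSpace Ω] [StandardBorelSpace Ω] [Nonempty Ω]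
    (P : Measure Ω) [IsProbabilityMeasure P]
    (d₁ d₂ : ℕ)
    (S1 : Ω → (Fin d₁ → ℝ)) (hS1 : Measurable S1)
    (S2 : Ω → (Fin d₂ → ℝ)) (hS2 : Measurable S2)
    (T1 T2 : Ω → ℝ) (hT1 : Measurable T1) (hT2 : Measurable T2)
    (hT1_01 : ∀ ω, T1 ω = 0 ∨ T1 ω = 1) (hT2_01 : ∀ ω, T2 ω = 0 ∨ T2 ω = 1)
    (Y11 : Ω → ℝ) (hY11m : Measurable Y11) (hY11b : ∃ C, ∀ ω, |Y11 ω| ≤ C)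
    (Y : Ω → ℝ) (hYm : Measurable Y)
    (hcons : ∀ ω, T1 ω * T2 ω * Y ω = T1 ω * T2 ω * Y11 ω)
    (M : ℝ) (hM : 0 < M)
    (π0 : (Fin d₁ → ℝ) → ℝ) (ρ0 ν0 : (Fin d₁ → ℝ) × (Fin d₂ → ℝ) → ℝ)
    (μ0 : (Fin d₁ → ℝ) → ℝ)
    (hπ0m : Measurable π0) (hρ0m : Measurable ρ0) (hν0m : Measurable ν0) (hμ0m : Measurable μ0)
    (hπ0b : ∃ C, ∀ x, |π0 x| ≤ C) (hρ0b : ∃ C, ∀ x, |ρ0 x| ≤ C)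
    (hν0b : ∃ C, ∀ x, |ν0 x| ≤ C) (hμ0b : ∃ C, ∀ x, |μ0 x| ≤ C)
    (hπ0mom : ∀ h : (Fin d₁ → ℝ) → ℝ, Measurable h → (∃ C, ∀ x, |h x| ≤ C) →
      ∫ ω, T1 ω * h (S1 ω) ∂P = ∫ ω, π0 (S1 ω) * h (S1 ω) ∂P)
    (hρ0mom : ∀ h : (Fin d₁ → ℝ) × (Fin d₂ → ℝ) → ℝ, Measurable h → (∃ C, ∀ x, |h x| ≤ C) →
      ∫ ω, T1 ω * T2 ω * h (S1 ω, S2 ω) ∂P = ∫ ω, T1 ω * ρ0 (S1 ω, S2 ω) * h (S1 ω, S2 ω) ∂P)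
    (hν0mom : ∀ h : (Fin d₁ → ℝ) × (Fin d₂ → ℝ) → ℝ, Measurable h → (∃ C, ∀ x, |h x| ≤ C) →
      ∫ ω, T1 ω * T2 ω * Y11 ω * h (S1 ω, S2 ω) ∂P
        = ∫ ω, T1 ω * T2 ω * ν0 (S1 ω, S2 ω) * h (S1 ω, S2 ω) ∂P)
    (hμ0mom : ∀ h : (Fin d₁ → ℝ) → ℝ, Measurable h → (∃ C, ∀ x, |h x| ≤ C) →
      ∫ ω, T1 ω * Y11 ω * h (S1 ω) ∂P = ∫ ω, T1 ω * μ0 (S1 ω) * h (S1 ω) ∂P)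
    (hpos : ∀ᵐ ω ∂P, 1 / M ≤ π0 (S1 ω) ∧ 1 / M ≤ ρ0 (S1 ω, S2 ω))
    (hign1 : CondIndepFun (MeasurableSpace.comap S1 inferInstance) hS1.comap_le Y11 T1 P)
    (hign2 : CondIndepFun
      (MeasurableSpace.comap (fun ω => (S1 ω, S2 ω)) inferInstance)
      (Measurable.comap_le (hS1.prodMk hS2))
      Y11 T2 (P[|{ω | T1 ω = 1}])) :
    ∀ h : (Fin d₁ → ℝ) → ℝ, Measurable h → (∃ C, ∀ x, |h x| ≤ C) →
      ∫ ω, T1 ω * ν0 (S1 ω, S2 ω) * h (S1 ω) ∂P = ∫ ω, T1 ω * μ0 (S1 ω) * h (S1 ω) ∂P := by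
  classical
  intro h hh hhb
  have hSb : Measurable (fun ω => (S1 ω, S2 ω)) := hS1.prodMk hS2
  set s : Set Ω := {ω | T1 ω = 1} with hsdef
  have hsm : MeasurableSet s := hT1 (measurableSet_singleton 1)
  have hT1f : ∀ (f : Ω → ℝ) ω, s.indicator f ω = T1 ω * f ω := by
    intro f ω
    rcases hT1_01 ω with h0 | h1
    · rw [Set.indicator_of_notMem (by simp [hsdef, h0]), h0, zero_mul]
    · rw [Set.indicator_of_mem (by simpa [hsdef] using h1), h1, one_mul]
  -- ∫ T1 = (P s).toReal and positivity
  have hPT1 : ∫ ω, T1 ω ∂P = (P s).toReal := by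
    rw [← measureReal_def, ← integral_indicator_one hsm]
    exact integral_congr_ae (Eventually.of_forall fun ω => by
      simpa using (hT1f 1 ω).symm)
  have hlow : (1:ℝ)/M ≤ ∫ ω, T1 ω ∂P := by
    have h1 := hπ0mom (fun _ => 1) measurable_const ⟨1, by norm_num⟩
    simp only [mul_one] at h1
    rw [h1]
    have hintπ : Integrable (fun ω => π0 (S1 ω)) P :=
      aux_integrable ((hπ0m.comp hS1).aestronglyMeasurable)
        ⟨hπ0b.choose, fun ω => hπ0b.choose_spec _⟩
    calc (1:ℝ)/M = ∫ _ω, (1:ℝ)/M ∂P := by simp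
      _ ≤ ∫ ω, π0 (S1 ω) ∂P :=
        integral_mono_ae (integrable_const _) hintπ (hpos.mono fun ω hω => hω.1)
  have hcpos : 0 < (P s).toReal := lt_of_lt_of_le (by positivity) (hPT1 ▸ hlow)
  have hPs0 : P s ≠ 0 := by
    intro hcon
    rw [hcon] at hcpos
    simp at hcpos
  set Q : Measure Ω := P[|s] with hQdef
  haveI hQprob : IsProbabilityMeasure Q := cond_isProbabilityMeasure hPs0
  set c : ℝ := (P s).toReal with hcdef
  -- translation between P and Q integrals
  have key : ∀ f : Ω → ℝ, ∫ ω, T1 ω * f ω ∂P = c * ∫ ω, f ω ∂Q := by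
    intro f
    have hQ : Q = (P s)⁻¹ • P.restrict s := rfl
    rw [hQ, integral_smul_measure, ENNReal.toReal_inv, ← integral_indicator hsm,
      integral_congr_ae (Eventually.of_forall fun ω => hT1f f ω), smul_eq_mul]
    field_simp
    rw [mul_div_assoc, hcdef, div_self (ne_of_gt (hcdef ▸ hcpos)), mul_one]
  have hBQ : ∀ f : Ω → ℝ, Measurable f → (∃ C, ∀ ω, |f ω| ≤ C) → Integrable f Q :=
    fun f hf hb => aux_integrable hf.aestronglyMeasurable hb
  -- moment identities under Q
  have hQρ : ∀ g : (Fin d₁ → ℝ) × (Fin d₂ → ℝ) → ℝ, Measurable g → (∃ C, ∀ x, |g x| ≤ C) →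
      ∫ ω, T2 ω * g (S1 ω, S2 ω) ∂Q = ∫ ω, ρ0 (S1 ω, S2 ω) * g (S1 ω, S2 ω) ∂Q := by
    intro g hg hgb
    have h1 := hρ0mom g hg hgb
    have hL : ∫ ω, T1 ω * T2 ω * g (S1 ω, S2 ω) ∂P = c * ∫ ω, T2 ω * g (S1 ω, S2 ω) ∂Q := by
      rw [← key]
      exact integral_congr_ae (Eventually.of_forall fun ω => by ring)
    have hR : ∫ ω, T1 ω * ρ0 (S1 ω, S2 ω) * g (S1 ω, S2 ω) ∂P
        = c * ∫ ω, ρ0 (S1 ω, S2 ω) * g (S1 ω, S2 ω) ∂Q := by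
      rw [← key]
      exact integral_congr_ae (Eventually.of_forall fun ω => by ring)
    exact mul_left_cancel₀ hcpos.ne' (by rw [← hL, ← hR]; exact h1)
  have hQν : ∀ g : (Fin d₁ → ℝ) × (Fin d₂ → ℝ) → ℝ, Measurable g → (∃ C, ∀ x, |g x| ≤ C) →
      ∫ ω, T2 ω * Y11 ω * g (S1 ω, S2 ω) ∂Q
        = ∫ ω, T2 ω * ν0 (S1 ω, S2 ω) * g (S1 ω, S2 ω) ∂Q := by
    intro g hg hgb
    have h1 := hν0mom g hg hgb
    have hL : ∫ ω, T1 ω * T2 ω * Y11 ω * g (S1 ω, S2 ω) ∂P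
        = c * ∫ ω, T2 ω * Y11 ω * g (S1 ω, S2 ω) ∂Q := by
      rw [← key]
      exact integral_congr_ae (Eventually.of_forall fun ω => by ring)
    have hR : ∫ ω, T1 ω * T2 ω * ν0 (S1 ω, S2 ω) * g (S1 ω, S2 ω) ∂P
        = c * ∫ ω, T2 ω * ν0 (S1 ω, S2 ω) * g (S1 ω, S2 ω) ∂Q := by
      rw [← key]
      exact integral_congr_ae (Eventually.of_forall fun ω => by ring)
    exact mul_left_cancel₀ hcpos.ne' (by rw [← hL, ← hR]; exact h1)
  -- the sub-σ-algebra generated by (S1, S2)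
  -- the sub-σ-algebra generated by (S1, S2)
  have hmbar : (MeasurableSpace.comap (fun ω => (S1 ω, S2 ω)) inferInstance) ≤ ‹MeasurableSpace Ω› := Measurable.comap_le hSb
  have hSbmbar : Measurable[(MeasurableSpace.comap (fun ω => (S1 ω, S2 ω)) inferInstance)] (fun ω => (S1 ω, S2 ω)) := measurable_iff_comap_le.mpr le_rfl
  -- T2 as an indicator
  have hAm : MeasurableSet (T2 ⁻¹' {(1:ℝ)}) := hT2 (measurableSet_singleton 1)
  have hT2f : ∀ ω, Set.indicator (T2 ⁻¹' {(1:ℝ)}) (fun _ => (1:ℝ)) ω = T2 ω := by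
    intro ω
    rcases hT2_01 ω with h0 | h1
    · rw [Set.indicator_of_notMem (by simp [h0]), h0]
    · rw [Set.indicator_of_mem (by simpa using h1), h1]
  have hindb1 : ∀ (t : Set Ω) ω, |t.indicator (fun _ => (1:ℝ)) ω| ≤ 1 := by
    intro t ω
    by_cases hω : ω ∈ t <;> simp [Set.indicator_apply, hω]
  have hindb : ∀ (t : Set Ω), ∃ C, ∀ ω, |t.indicator (fun _ => (1:ℝ)) ω| ≤ C :=
    fun t => ⟨1, hindb1 t⟩
  have hindm : ∀ (t : Set Ω), MeasurableSet t → Measurable (t.indicator (fun _ => (1:ℝ))) :=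
    fun t ht => measurable_const.indicator ht
  have hAint : Integrable (Set.indicator (T2 ⁻¹' {(1:ℝ)}) (fun _ => (1:ℝ))) Q := hBQ _ (hindm _ hAm) (hindb _)
  -- conditional expectation of the indicator of A, and a clamped version
  have hR0 : 0 ≤ᵐ[Q] (Q[Set.indicator (T2 ⁻¹' {(1:ℝ)}) (fun _ => (1:ℝ)) | (MeasurableSpace.comap (fun ω => (S1 ω, S2 ω)) inferInstance)]) :=
    condExp_nonneg (Eventually.of_forall fun ω => Set.indicator_nonneg (fun _ _ => zero_le_one) ω)
  have hR1 : (Q[Set.indicator (T2 ⁻¹' {(1:ℝ)}) (fun _ => (1:ℝ)) | (MeasurableSpace.comap (fun ω => (S1 ω, S2 ω)) inferInstance)]) ≤ᵐ[Q] (fun _ => (1:ℝ)) := by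
    have hmono := condExp_mono (m := (MeasurableSpace.comap (fun ω => (S1 ω, S2 ω)) inferInstance)) (μ := Q) hAint (integrable_const (1:ℝ))
      (Eventually.of_forall fun ω => by
        by_cases hω : ω ∈ (T2 ⁻¹' {(1:ℝ)}) <;> simp [Set.indicator_apply, hω])
    rwa [condExp_const hmbar] at hmono
  have hRcae : (fun ω => max 0 (min ((Q[Set.indicator (T2 ⁻¹' {(1:ℝ)}) (fun _ => (1:ℝ)) | (MeasurableSpace.comap (fun ω => (S1 ω, S2 ω)) inferInstance)]) ω) 1)) =ᵐ[Q] (Q[Set.indicator (T2 ⁻¹' {(1:ℝ)}) (fun _ => (1:ℝ)) | (MeasurableSpace.comap (fun ω => (S1 ω, S2 ω)) inferInstance)]) := by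
    filter_upwards [hR0, hR1] with ω h0 h1
    simp only [Pi.zero_apply] at h0
    beta_reduce
    rw [min_eq_left h1, max_eq_right h0]
  have hRcm : Measurable[(MeasurableSpace.comap (fun ω => (S1 ω, S2 ω)) inferInstance)] (fun ω => max 0 (min ((Q[Set.indicator (T2 ⁻¹' {(1:ℝ)}) (fun _ => (1:ℝ)) | (MeasurableSpace.comap (fun ω => (S1 ω, S2 ω)) inferInstance)]) ω) 1)) :=
    measurable_const.max ((stronglyMeasurable_condExp.measurable).min measurable_const)
  have hRcsm : StronglyMeasurable[(MeasurableSpace.comap (fun ω => (S1 ω, S2 ω)) inferInstance)] (fun ω => max 0 (min ((Q[Set.indicator (T2 ⁻¹' {(1:ℝ)}) (fun _ => (1:ℝ)) | (MeasurableSpace.comap (fun ω => (S1 ω, S2 ω)) inferInstance)]) ω) 1)) := hRcm.stronglyMeasurable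
  have hRcb : ∀ ω, |(fun ω => max 0 (min ((Q[Set.indicator (T2 ⁻¹' {(1:ℝ)}) (fun _ => (1:ℝ)) | (MeasurableSpace.comap (fun ω => (S1 ω, S2 ω)) inferInstance)]) ω) 1)) ω| ≤ 1 := by
    intro ω
    beta_reduce
    rw [abs_le]
    constructor
    · linarith [le_max_left (0:ℝ) (min ((Q[Set.indicator (T2 ⁻¹' {(1:ℝ)}) (fun _ => (1:ℝ)) | (MeasurableSpace.comap (fun ω => (S1 ω, S2 ω)) inferInstance)]) ω) 1)]
    · exact max_le zero_le_one (min_le_right _ _)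
  -- conditional independence: product rule for indicators
  have hci := (condIndepFun_iff_condExp_inter_preimage_eq_mul
    (m' := (MeasurableSpace.comap (fun ω => (S1 ω, S2 ω)) inferInstance)) (hm' := hmbar) (μ := Q) hY11m hT2).mp hign2
  -- Claim (indicator form)
  have claimInd : ∀ (k : Ω → ℝ), StronglyMeasurable[(MeasurableSpace.comap (fun ω => (S1 ω, S2 ω)) inferInstance)] k → (∃ C, ∀ ω, |k ω| ≤ C) →
      ∀ sY : Set ℝ, MeasurableSet sY →
      ∫ ω, Set.indicator sY (fun _ => (1:ℝ)) (Y11 ω) * (Set.indicator (T2 ⁻¹' {(1:ℝ)}) (fun _ => (1:ℝ)) ω * k ω) ∂Q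
        = ∫ ω, Set.indicator sY (fun _ => (1:ℝ)) (Y11 ω) * ((fun ω => max 0 (min ((Q[Set.indicator (T2 ⁻¹' {(1:ℝ)}) (fun _ => (1:ℝ)) | (MeasurableSpace.comap (fun ω => (S1 ω, S2 ω)) inferInstance)]) ω) 1)) ω * k ω) ∂Q := by
    intro k hk hkb sY hsY
    have hkm : Measurable k := hk.measurable.mono hmbar le_rfl
    obtain ⟨Ck, hCk⟩ := hkb
    have hprod : ∀ ω, Set.indicator sY (fun _ => (1:ℝ)) (Y11 ω) * Set.indicator (T2 ⁻¹' {(1:ℝ)}) (fun _ => (1:ℝ)) ω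
        = Set.indicator (Y11 ⁻¹' sY ∩ (T2 ⁻¹' {(1:ℝ)})) (fun _ => (1:ℝ)) ω := by
      intro ω
      by_cases h1 : Y11 ω ∈ sY <;> by_cases h2 : ω ∈ (T2 ⁻¹' {(1:ℝ)}) <;>
        simp [Set.indicator_apply, h1, h2, Set.mem_inter_iff]
    have hX1int : Integrable (Set.indicator (Y11 ⁻¹' sY ∩ (T2 ⁻¹' {(1:ℝ)})) (fun _ => (1:ℝ))) Q :=
      hBQ _ (hindm _ ((hY11m hsY).inter hAm)) (hindb _)
    have hX2int : Integrable (Set.indicator (Y11 ⁻¹' sY) (fun _ => (1:ℝ))) Q :=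
      hBQ _ (hindm _ (hY11m hsY)) (hindb _)
    have hkRcb : ∀ ω, |k ω * (fun ω => max 0 (min ((Q[Set.indicator (T2 ⁻¹' {(1:ℝ)}) (fun _ => (1:ℝ)) | (MeasurableSpace.comap (fun ω => (S1 ω, S2 ω)) inferInstance)]) ω) 1)) ω| ≤ Ck := by
      intro ω
      calc |k ω * (fun ω => max 0 (min ((Q[Set.indicator (T2 ⁻¹' {(1:ℝ)}) (fun _ => (1:ℝ)) | (MeasurableSpace.comap (fun ω => (S1 ω, S2 ω)) inferInstance)]) ω) 1)) ω| = |k ω| * |(fun ω => max 0 (min ((Q[Set.indicator (T2 ⁻¹' {(1:ℝ)}) (fun _ => (1:ℝ)) | (MeasurableSpace.comap (fun ω => (S1 ω, S2 ω)) inferInstance)]) ω) 1)) ω| := abs_mul _ _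
        _ ≤ Ck * 1 := mul_le_mul (hCk ω) (hRcb ω) (abs_nonneg _) ((abs_nonneg _).trans (hCk ω))
        _ = Ck := mul_one _
    calc ∫ ω, Set.indicator sY (fun _ => (1:ℝ)) (Y11 ω) * (Set.indicator (T2 ⁻¹' {(1:ℝ)}) (fun _ => (1:ℝ)) ω * k ω) ∂Q
        = ∫ ω, k ω * Set.indicator (Y11 ⁻¹' sY ∩ (T2 ⁻¹' {(1:ℝ)})) (fun _ => (1:ℝ)) ω ∂Q := by
          refine integral_congr_ae (Eventually.of_forall fun ω => ?_)
          beta_reduce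
          rw [← hprod ω]; ring
      _ = ∫ ω, k ω * (Q[Set.indicator (Y11 ⁻¹' sY ∩ (T2 ⁻¹' {(1:ℝ)})) (fun _ => (1:ℝ)) | (MeasurableSpace.comap (fun ω => (S1 ω, S2 ω)) inferInstance)]) ω ∂Q :=
          aux_pull hmbar hk ⟨Ck, hCk⟩ hX1int
      _ = ∫ ω, (k ω * (fun ω => max 0 (min ((Q[Set.indicator (T2 ⁻¹' {(1:ℝ)}) (fun _ => (1:ℝ)) | (MeasurableSpace.comap (fun ω => (S1 ω, S2 ω)) inferInstance)]) ω) 1)) ω) * (Q[Set.indicator (Y11 ⁻¹' sY) (fun _ => (1:ℝ)) | (MeasurableSpace.comap (fun ω => (S1 ω, S2 ω)) inferInstance)]) ω ∂Q := by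
          refine integral_congr_ae ?_
          filter_upwards [hci sY {1} hsY (measurableSet_singleton 1), hRcae] with ω hω hRω
          beta_reduce
          beta_reduce at hω hRω
          rw [hω, hRω]
          ring
      _ = ∫ ω, (k ω * (fun ω => max 0 (min ((Q[Set.indicator (T2 ⁻¹' {(1:ℝ)}) (fun _ => (1:ℝ)) | (MeasurableSpace.comap (fun ω => (S1 ω, S2 ω)) inferInstance)]) ω) 1)) ω) * Set.indicator (Y11 ⁻¹' sY) (fun _ => (1:ℝ)) ω ∂Q :=
          (aux_pull hmbar (hk.mul hRcsm) ⟨Ck, hkRcb⟩ hX2int).symm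
      _ = ∫ ω, Set.indicator sY (fun _ => (1:ℝ)) (Y11 ω) * ((fun ω => max 0 (min ((Q[Set.indicator (T2 ⁻¹' {(1:ℝ)}) (fun _ => (1:ℝ)) | (MeasurableSpace.comap (fun ω => (S1 ω, S2 ω)) inferInstance)]) ω) 1)) ω * k ω) ∂Q := by
          refine integral_congr_ae (Eventually.of_forall fun ω => ?_)
          beta_reduce
          by_cases h1 : Y11 ω ∈ sY
          · rw [Set.indicator_of_mem h1,
              Set.indicator_of_mem (show ω ∈ Y11 ⁻¹' sY from h1)]
            ring
          · rw [Set.indicator_of_notMem h1,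
              Set.indicator_of_notMem (show ω ∉ Y11 ⁻¹' sY from h1)]
            ring
  -- Claim (bounded form, specialised to Y11 itself)
  obtain ⟨CY, hCY⟩ := hY11b
  have hCY0 : 0 ≤ CY := le_trans (abs_nonneg _) (hCY Classical.ofNonempty)
  have claimA : ∀ (k : Ω → ℝ), StronglyMeasurable[(MeasurableSpace.comap (fun ω => (S1 ω, S2 ω)) inferInstance)] k → (∃ C, ∀ ω, |k ω| ≤ C) →
      ∫ ω, Y11 ω * (Set.indicator (T2 ⁻¹' {(1:ℝ)}) (fun _ => (1:ℝ)) ω * k ω) ∂Q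
        = ∫ ω, Y11 ω * ((fun ω => max 0 (min ((Q[Set.indicator (T2 ⁻¹' {(1:ℝ)}) (fun _ => (1:ℝ)) | (MeasurableSpace.comap (fun ω => (S1 ω, S2 ω)) inferInstance)]) ω) 1)) ω * k ω) ∂Q := by
    intro k hk hkb
    have hkm : Measurable k := hk.measurable.mono hmbar le_rfl
    obtain ⟨Ck, hCk⟩ := hkb
    set φ : ℝ → ℝ := fun x => max (-CY) (min x CY) with hφdef
    have hφm : Measurable φ := measurable_const.max (measurable_id.min measurable_const)
    have hφb : ∃ C, ∀ x, |φ x| ≤ C := by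
      refine ⟨CY, fun x => ?_⟩
      rw [abs_le]
      constructor
      · simp [hφdef]
      · exact max_le (by linarith) (min_le_right _ _)
    have hφY : ∀ ω, φ (Y11 ω) = Y11 ω := by
      intro ω
      have := abs_le.mp (hCY ω)
      simp only [hφdef]
      rw [min_eq_left this.2, max_eq_right this.1]
    have hW₁ : Integrable (fun ω => Set.indicator (T2 ⁻¹' {(1:ℝ)}) (fun _ => (1:ℝ)) ω * k ω) Q :=
      (hBQ k hkm ⟨Ck, hCk⟩).bdd_mul (hindm _ hAm).aestronglyMeasurable
        (c := 1) (ae_of_all _ fun ω => by simpa [Real.norm_eq_abs] using hindb1 (T2 ⁻¹' {(1:ℝ)}) ω)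
    have hW₂ : Integrable (fun ω => (fun ω => max 0 (min ((Q[Set.indicator (T2 ⁻¹' {(1:ℝ)}) (fun _ => (1:ℝ)) | (MeasurableSpace.comap (fun ω => (S1 ω, S2 ω)) inferInstance)]) ω) 1)) ω * k ω) Q :=
      (hBQ k hkm ⟨Ck, hCk⟩).bdd_mul ((hRcm.mono hmbar le_rfl).aestronglyMeasurable)
        (c := 1) (ae_of_all _ fun ω => by simpa [Real.norm_eq_abs] using hRcb ω)
    have hext := aux_ext hY11m hW₁ hW₂ (claimInd k hk ⟨Ck, hCk⟩) hφm hφb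
    calc ∫ ω, Y11 ω * (Set.indicator (T2 ⁻¹' {(1:ℝ)}) (fun _ => (1:ℝ)) ω * k ω) ∂Q
        = ∫ ω, φ (Y11 ω) * (Set.indicator (T2 ⁻¹' {(1:ℝ)}) (fun _ => (1:ℝ)) ω * k ω) ∂Q := by
          refine integral_congr_ae (Eventually.of_forall fun ω => ?_)
          beta_reduce
          rw [hφY ω]
      _ = ∫ ω, φ (Y11 ω) * ((fun ω => max 0 (min ((Q[Set.indicator (T2 ⁻¹' {(1:ℝ)}) (fun _ => (1:ℝ)) | (MeasurableSpace.comap (fun ω => (S1 ω, S2 ω)) inferInstance)]) ω) 1)) ω * k ω) ∂Q := hext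
      _ = ∫ ω, Y11 ω * ((fun ω => max 0 (min ((Q[Set.indicator (T2 ⁻¹' {(1:ℝ)}) (fun _ => (1:ℝ)) | (MeasurableSpace.comap (fun ω => (S1 ω, S2 ω)) inferInstance)]) ω) 1)) ω * k ω) ∂Q := by
          refine integral_congr_ae (Eventually.of_forall fun ω => ?_)
          beta_reduce
          rw [hφY ω]
  -- identify Rc with ρ0 ∘ (S1, S2)
  obtain ⟨Cρ, hCρ⟩ := hρ0b
  have hρSbm : Measurable[(MeasurableSpace.comap (fun ω => (S1 ω, S2 ω)) inferInstance)] (fun ω => ρ0 (S1 ω, S2 ω)) := hρ0m.comp hSbmbar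
  have hρint : Integrable (fun ω => ρ0 (S1 ω, S2 ω)) Q :=
    hBQ _ (hρ0m.comp hSb) ⟨Cρ, fun ω => hCρ _⟩
  have hRcint : Integrable (fun ω => max 0 (min ((Q[Set.indicator (T2 ⁻¹' {(1:ℝ)}) (fun _ => (1:ℝ)) | (MeasurableSpace.comap (fun ω => (S1 ω, S2 ω)) inferInstance)]) ω) 1)) Q := hBQ _ (hRcm.mono hmbar le_rfl) ⟨1, hRcb⟩
  have hRcρ : (fun ω => max 0 (min ((Q[Set.indicator (T2 ⁻¹' {(1:ℝ)}) (fun _ => (1:ℝ)) | (MeasurableSpace.comap (fun ω => (S1 ω, S2 ω)) inferInstance)]) ω) 1)) =ᵐ[Q] (fun ω => ρ0 (S1 ω, S2 ω)) := by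
    have hz : ∀ g : (Fin d₁ → ℝ) × (Fin d₂ → ℝ) → ℝ, Measurable g → (∃ C, ∀ x, |g x| ≤ C) →
        ∫ ω, ((fun ω => max 0 (min ((Q[Set.indicator (T2 ⁻¹' {(1:ℝ)}) (fun _ => (1:ℝ)) | (MeasurableSpace.comap (fun ω => (S1 ω, S2 ω)) inferInstance)]) ω) 1)) ω - ρ0 (S1 ω, S2 ω)) * g (S1 ω, S2 ω) ∂Q = 0 := by
      intro g hg hgb
      obtain ⟨Cg, hCg⟩ := hgb
      have hgSbm : StronglyMeasurable[(MeasurableSpace.comap (fun ω => (S1 ω, S2 ω)) inferInstance)] (fun ω => g (S1 ω, S2 ω)) :=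
        (hg.comp hSbmbar).stronglyMeasurable
      have hgSbb : ∃ C, ∀ ω, |g (S1 ω, S2 ω)| ≤ C := ⟨Cg, fun ω => hCg _⟩
      have e1 : ∫ ω, (fun ω => max 0 (min ((Q[Set.indicator (T2 ⁻¹' {(1:ℝ)}) (fun _ => (1:ℝ)) | (MeasurableSpace.comap (fun ω => (S1 ω, S2 ω)) inferInstance)]) ω) 1)) ω * g (S1 ω, S2 ω) ∂Q = ∫ ω, ρ0 (S1 ω, S2 ω) * g (S1 ω, S2 ω) ∂Q := by
        calc ∫ ω, (fun ω => max 0 (min ((Q[Set.indicator (T2 ⁻¹' {(1:ℝ)}) (fun _ => (1:ℝ)) | (MeasurableSpace.comap (fun ω => (S1 ω, S2 ω)) inferInstance)]) ω) 1)) ω * g (S1 ω, S2 ω) ∂Q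
            = ∫ ω, g (S1 ω, S2 ω) * (Q[Set.indicator (T2 ⁻¹' {(1:ℝ)}) (fun _ => (1:ℝ)) | (MeasurableSpace.comap (fun ω => (S1 ω, S2 ω)) inferInstance)]) ω ∂Q := by
              refine integral_congr_ae ?_
              filter_upwards [hRcae] with ω hRω
              beta_reduce
              beta_reduce at hRω
              rw [hRω]
              ring
          _ = ∫ ω, g (S1 ω, S2 ω) * Set.indicator (T2 ⁻¹' {(1:ℝ)}) (fun _ => (1:ℝ)) ω ∂Q :=
              (aux_pull hmbar hgSbm hgSbb hAint).symm
          _ = ∫ ω, T2 ω * g (S1 ω, S2 ω) ∂Q := by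
              refine integral_congr_ae (Eventually.of_forall fun ω => ?_)
              beta_reduce
              rw [hT2f ω]
              ring
          _ = ∫ ω, ρ0 (S1 ω, S2 ω) * g (S1 ω, S2 ω) ∂Q := hQρ g hg ⟨Cg, hCg⟩
      have hint1 : Integrable (fun ω => (fun ω => max 0 (min ((Q[Set.indicator (T2 ⁻¹' {(1:ℝ)}) (fun _ => (1:ℝ)) | (MeasurableSpace.comap (fun ω => (S1 ω, S2 ω)) inferInstance)]) ω) 1)) ω * g (S1 ω, S2 ω)) Q :=
        (hBQ _ (hg.comp hSb) hgSbb).bdd_mul ((hRcm.mono hmbar le_rfl).aestronglyMeasurable)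
          (c := 1) (ae_of_all _ fun ω => by simpa [Real.norm_eq_abs] using hRcb ω)
      have hint2 : Integrable (fun ω => ρ0 (S1 ω, S2 ω) * g (S1 ω, S2 ω)) Q :=
        (hBQ _ (hg.comp hSb) hgSbb).bdd_mul ((hρ0m.comp hSb).aestronglyMeasurable)
          (c := Cρ) (ae_of_all _ fun ω => by simpa [Real.norm_eq_abs] using hCρ (S1 ω, S2 ω))
      have : ∫ ω, ((fun ω => max 0 (min ((Q[Set.indicator (T2 ⁻¹' {(1:ℝ)}) (fun _ => (1:ℝ)) | (MeasurableSpace.comap (fun ω => (S1 ω, S2 ω)) inferInstance)]) ω) 1)) ω - ρ0 (S1 ω, S2 ω)) * g (S1 ω, S2 ω) ∂Q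
          = ∫ ω, (fun ω => max 0 (min ((Q[Set.indicator (T2 ⁻¹' {(1:ℝ)}) (fun _ => (1:ℝ)) | (MeasurableSpace.comap (fun ω => (S1 ω, S2 ω)) inferInstance)]) ω) 1)) ω * g (S1 ω, S2 ω) ∂Q - ∫ ω, ρ0 (S1 ω, S2 ω) * g (S1 ω, S2 ω) ∂Q := by
        rw [← integral_sub hint1 hint2]
        refine integral_congr_ae (Eventually.of_forall fun ω => ?_)
        beta_reduce
        ring
      rw [this, e1, sub_self]
    have hz' := aux_zero (f := fun ω => (S1 ω, S2 ω))
      (F := fun ω => (fun ω => max 0 (min ((Q[Set.indicator (T2 ⁻¹' {(1:ℝ)}) (fun _ => (1:ℝ)) | (MeasurableSpace.comap (fun ω => (S1 ω, S2 ω)) inferInstance)]) ω) 1)) ω - ρ0 (S1 ω, S2 ω)) (hRcm.sub hρSbm) (hRcint.sub hρint) hz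
    filter_upwards [hz'] with ω hω
    beta_reduce
    beta_reduce at hω
    simp only [Pi.zero_apply] at hω
    linarith [hω]
  -- identify ν0 ∘ (S1,S2) with the conditional expectation of Y11
  have hY11int : Integrable Y11 Q := hBQ _ hY11m ⟨CY, hCY⟩
  obtain ⟨Cν, hCν⟩ := hν0b
  have hνint : Integrable (fun ω => ν0 (S1 ω, S2 ω)) Q :=
    hBQ _ (hν0m.comp hSb) ⟨Cν, fun ω => hCν _⟩
  have hνE : (fun ω => ν0 (S1 ω, S2 ω)) =ᵐ[Q] Q[Y11 | (MeasurableSpace.comap (fun ω => (S1 ω, S2 ω)) inferInstance)] := by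
    have hz : ∀ g : (Fin d₁ → ℝ) × (Fin d₂ → ℝ) → ℝ, Measurable g → (∃ C, ∀ x, |g x| ≤ C) →
        ∫ ω, (ρ0 (S1 ω, S2 ω) * (ν0 (S1 ω, S2 ω) - (Q[Y11 | (MeasurableSpace.comap (fun ω => (S1 ω, S2 ω)) inferInstance)]) ω)) * g (S1 ω, S2 ω) ∂Q = 0 := by
      intro g hg hgb
      obtain ⟨Cg, hCg⟩ := hgb
      have hgSbm : StronglyMeasurable[(MeasurableSpace.comap (fun ω => (S1 ω, S2 ω)) inferInstance)] (fun ω => g (S1 ω, S2 ω)) :=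
        (hg.comp hSbmbar).stronglyMeasurable
      have hgSbb : ∃ C, ∀ ω, |g (S1 ω, S2 ω)| ≤ C := ⟨Cg, fun ω => hCg _⟩
      have hgSbQ : Integrable (fun ω => g (S1 ω, S2 ω)) Q := hBQ _ (hg.comp hSb) hgSbb
      -- left branch: ∫ ρ ν g
      have eL : ∫ ω, ρ0 (S1 ω, S2 ω) * ν0 (S1 ω, S2 ω) * g (S1 ω, S2 ω) ∂Q
          = ∫ ω, T2 ω * Y11 ω * g (S1 ω, S2 ω) ∂Q := by
        have h1 := hQρ (fun x => ν0 x * g x) (hν0m.mul hg)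
          ⟨Cν * Cg, fun x => by
            rw [abs_mul]
            exact mul_le_mul (hCν x) (hCg x) (abs_nonneg _) ((abs_nonneg _).trans (hCν x))⟩
        have h2 := hQν g hg ⟨Cg, hCg⟩
        calc ∫ ω, ρ0 (S1 ω, S2 ω) * ν0 (S1 ω, S2 ω) * g (S1 ω, S2 ω) ∂Q
            = ∫ ω, ρ0 (S1 ω, S2 ω) * (ν0 (S1 ω, S2 ω) * g (S1 ω, S2 ω)) ∂Q := by
              refine integral_congr_ae (Eventually.of_forall fun ω => ?_); beta_reduce; ring
          _ = ∫ ω, T2 ω * (ν0 (S1 ω, S2 ω) * g (S1 ω, S2 ω)) ∂Q := h1.symm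
          _ = ∫ ω, T2 ω * ν0 (S1 ω, S2 ω) * g (S1 ω, S2 ω) ∂Q := by
              refine integral_congr_ae (Eventually.of_forall fun ω => ?_); beta_reduce; ring
          _ = ∫ ω, T2 ω * Y11 ω * g (S1 ω, S2 ω) ∂Q := h2.symm
      -- right branch
      have eR : ∫ ω, T2 ω * Y11 ω * g (S1 ω, S2 ω) ∂Q
          = ∫ ω, ρ0 (S1 ω, S2 ω) * (Q[Y11 | (MeasurableSpace.comap (fun ω => (S1 ω, S2 ω)) inferInstance)]) ω * g (S1 ω, S2 ω) ∂Q := by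
        have hkb : ∃ C, ∀ ω, |(fun ω => max 0 (min ((Q[Set.indicator (T2 ⁻¹' {(1:ℝ)}) (fun _ => (1:ℝ)) | (MeasurableSpace.comap (fun ω => (S1 ω, S2 ω)) inferInstance)]) ω) 1)) ω * g (S1 ω, S2 ω)| ≤ C := by
          refine ⟨Cg, fun ω => ?_⟩
          rw [abs_mul]
          calc |(fun ω => max 0 (min ((Q[Set.indicator (T2 ⁻¹' {(1:ℝ)}) (fun _ => (1:ℝ)) | (MeasurableSpace.comap (fun ω => (S1 ω, S2 ω)) inferInstance)]) ω) 1)) ω| * |g (S1 ω, S2 ω)| ≤ 1 * Cg :=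
              mul_le_mul (hRcb ω) (hCg _) (abs_nonneg _) zero_le_one
            _ = Cg := one_mul _
        calc ∫ ω, T2 ω * Y11 ω * g (S1 ω, S2 ω) ∂Q
            = ∫ ω, Y11 ω * (Set.indicator (T2 ⁻¹' {(1:ℝ)}) (fun _ => (1:ℝ)) ω * (fun ω => g (S1 ω, S2 ω)) ω) ∂Q := by
              refine integral_congr_ae (Eventually.of_forall fun ω => ?_)
              beta_reduce
              rw [hT2f ω]
              ring
          _ = ∫ ω, Y11 ω * ((fun ω => max 0 (min ((Q[Set.indicator (T2 ⁻¹' {(1:ℝ)}) (fun _ => (1:ℝ)) | (MeasurableSpace.comap (fun ω => (S1 ω, S2 ω)) inferInstance)]) ω) 1)) ω * (fun ω => g (S1 ω, S2 ω)) ω) ∂Q :=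
              claimA _ hgSbm hgSbb
          _ = ∫ ω, (fun ω => (fun ω => max 0 (min ((Q[Set.indicator (T2 ⁻¹' {(1:ℝ)}) (fun _ => (1:ℝ)) | (MeasurableSpace.comap (fun ω => (S1 ω, S2 ω)) inferInstance)]) ω) 1)) ω * g (S1 ω, S2 ω)) ω * Y11 ω ∂Q := by
              refine integral_congr_ae (Eventually.of_forall fun ω => ?_); beta_reduce; ring
          _ = ∫ ω, (fun ω => (fun ω => max 0 (min ((Q[Set.indicator (T2 ⁻¹' {(1:ℝ)}) (fun _ => (1:ℝ)) | (MeasurableSpace.comap (fun ω => (S1 ω, S2 ω)) inferInstance)]) ω) 1)) ω * g (S1 ω, S2 ω)) ω * (Q[Y11 | (MeasurableSpace.comap (fun ω => (S1 ω, S2 ω)) inferInstance)]) ω ∂Q :=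
              aux_pull hmbar (hRcsm.mul hgSbm) hkb hY11int
          _ = ∫ ω, ρ0 (S1 ω, S2 ω) * (Q[Y11 | (MeasurableSpace.comap (fun ω => (S1 ω, S2 ω)) inferInstance)]) ω * g (S1 ω, S2 ω) ∂Q := by
              refine integral_congr_ae ?_
              filter_upwards [hRcρ] with ω hω
              beta_reduce
              beta_reduce at hω
              rw [hω]
              ring
      -- combine
      have hEint : Integrable (fun ω => (Q[Y11 | (MeasurableSpace.comap (fun ω => (S1 ω, S2 ω)) inferInstance)]) ω) Q := integrable_condExp
      have hρνint : Integrable (fun ω => ρ0 (S1 ω, S2 ω) * ν0 (S1 ω, S2 ω) * g (S1 ω, S2 ω)) Q := by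
        refine hBQ _ (((hρ0m.comp hSb).mul (hν0m.comp hSb)).mul (hg.comp hSb)) ?_
        refine ⟨Cρ * Cν * Cg, fun ω => ?_⟩
        rw [abs_mul, abs_mul]
        have h1 : 0 ≤ Cρ := (abs_nonneg _).trans (hCρ (S1 ω, S2 ω))
        have h2 : 0 ≤ Cν := (abs_nonneg _).trans (hCν (S1 ω, S2 ω))
        exact mul_le_mul (mul_le_mul (hCρ _) (hCν _) (abs_nonneg _) h1) (hCg _) (abs_nonneg _)
          (mul_nonneg h1 h2)
      have hρEgint : Integrable (fun ω => ρ0 (S1 ω, S2 ω) * (Q[Y11 | (MeasurableSpace.comap (fun ω => (S1 ω, S2 ω)) inferInstance)]) ω * g (S1 ω, S2 ω)) Q := by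
        have h1 : Integrable (fun ω => (ρ0 (S1 ω, S2 ω) * g (S1 ω, S2 ω)) * (Q[Y11 | (MeasurableSpace.comap (fun ω => (S1 ω, S2 ω)) inferInstance)]) ω) Q :=
          hEint.bdd_mul (((hρ0m.comp hSb).mul (hg.comp hSb)).aestronglyMeasurable)
            (c := Cρ * Cg) (ae_of_all _ fun ω => by
              have h2 : 0 ≤ Cρ := (abs_nonneg _).trans (hCρ (S1 ω, S2 ω))
              rw [Real.norm_eq_abs, abs_mul]
              exact mul_le_mul (hCρ _) (hCg _) (abs_nonneg _) h2)
        exact h1.congr (Eventually.of_forall fun ω => by ring)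
      have hsplit : ∫ ω, (ρ0 (S1 ω, S2 ω) * (ν0 (S1 ω, S2 ω) - (Q[Y11 | (MeasurableSpace.comap (fun ω => (S1 ω, S2 ω)) inferInstance)]) ω)) * g (S1 ω, S2 ω) ∂Q
          = ∫ ω, ρ0 (S1 ω, S2 ω) * ν0 (S1 ω, S2 ω) * g (S1 ω, S2 ω) ∂Q
            - ∫ ω, ρ0 (S1 ω, S2 ω) * (Q[Y11 | (MeasurableSpace.comap (fun ω => (S1 ω, S2 ω)) inferInstance)]) ω * g (S1 ω, S2 ω) ∂Q := by
        rw [← integral_sub hρνint hρEgint]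
        refine integral_congr_ae (Eventually.of_forall fun ω => ?_)
        beta_reduce
        ring
      rw [hsplit, eL, eR, sub_self]
    have hFm : Measurable[(MeasurableSpace.comap (fun ω => (S1 ω, S2 ω)) inferInstance)] (fun ω => ρ0 (S1 ω, S2 ω) * (ν0 (S1 ω, S2 ω) - (Q[Y11 | (MeasurableSpace.comap (fun ω => (S1 ω, S2 ω)) inferInstance)]) ω)) :=
      hρSbm.mul ((hν0m.comp hSbmbar).sub stronglyMeasurable_condExp.measurable)
    have hFint : Integrable (fun ω => ρ0 (S1 ω, S2 ω) * (ν0 (S1 ω, S2 ω) - (Q[Y11 | (MeasurableSpace.comap (fun ω => (S1 ω, S2 ω)) inferInstance)]) ω)) Q :=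
      (hνint.sub integrable_condExp).bdd_mul ((hρ0m.comp hSb).aestronglyMeasurable)
        (c := Cρ) (ae_of_all _ fun ω => by simpa [Real.norm_eq_abs] using hCρ (S1 ω, S2 ω))
    have hF0 := aux_zero (f := fun ω => (S1 ω, S2 ω)) hFm hFint hz
    have hposQ : ∀ᵐ ω ∂Q, 1 / M ≤ ρ0 (S1 ω, S2 ω) :=
      (hpos.mono fun ω hω => hω.2).filter_mono
        (Measure.AbsolutelyContinuous.ae_le cond_absolutelyContinuous)
    filter_upwards [hF0, hposQ] with ω h0 hp
    beta_reduce
    beta_reduce at h0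
    simp only [Pi.zero_apply] at h0
    have hρpos : 0 < ρ0 (S1 ω, S2 ω) := lt_of_lt_of_le (one_div_pos.mpr hM) hp
    rcases mul_eq_zero.mp h0 with hcase | hcase
    · exact absurd hcase hρpos.ne'
    · exact sub_eq_zero.mp hcase
  -- final chain
  obtain ⟨Ch, hCh⟩ := hhb
  have hkS1 : StronglyMeasurable[(MeasurableSpace.comap (fun ω => (S1 ω, S2 ω)) inferInstance)] (fun ω => h (S1 ω)) :=
    (Measurable.stronglyMeasurable ((hh.comp measurable_fst).comp hSbmbar) :)
  have e2 : ∫ ω, ν0 (S1 ω, S2 ω) * h (S1 ω) ∂Q = ∫ ω, h (S1 ω) * Y11 ω ∂Q := by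
    calc ∫ ω, ν0 (S1 ω, S2 ω) * h (S1 ω) ∂Q
        = ∫ ω, h (S1 ω) * (Q[Y11 | (MeasurableSpace.comap (fun ω => (S1 ω, S2 ω)) inferInstance)]) ω ∂Q := by
          refine integral_congr_ae ?_
          filter_upwards [hνE] with ω hω
          beta_reduce
          beta_reduce at hω
          rw [hω]
          ring
      _ = ∫ ω, h (S1 ω) * Y11 ω ∂Q :=
          (aux_pull hmbar hkS1 ⟨Ch, fun ω => hCh _⟩ hY11int).symm
  have eL : ∫ ω, T1 ω * ν0 (S1 ω, S2 ω) * h (S1 ω) ∂P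
      = c * ∫ ω, ν0 (S1 ω, S2 ω) * h (S1 ω) ∂Q := by
    rw [← key]
    exact integral_congr_ae (Eventually.of_forall fun ω => by beta_reduce; ring)
  have eR : ∫ ω, T1 ω * Y11 ω * h (S1 ω) ∂P = c * ∫ ω, h (S1 ω) * Y11 ω ∂Q := by
    rw [← key]
    exact integral_congr_ae (Eventually.of_forall fun ω => by beta_reduce; ring)
  rw [eL, e2, ← eR, hμ0mom h hh ⟨Ch, hCh⟩]
end

section
/- Under the stated dynamic treatment setup with fixed nuisance estimates π̂, ρ̂, ν̂ (π̂ ≥ 1/K, ρ̂ ≥ 1/K pointwise), the bias term R₂ := E[(T₁/π̂(S₁))·(1 − ρ⁰(S̄₂)/ρ̂(S̄₂))·(ν̂(S̄₂) − ν⁰(S̄₂))] satisfies R₂ = E[ T₁·T₂·(ρ̂(S̄₂) − ρ⁰(S̄₂))·(ν̂(S̄₂) − ν⁰(S̄₂)) / (π̂(S₁)·ρ̂(S̄₂)·ρ⁰(S̄₂)) ] and obeys the Cauchy–Schwarz product bound |R₂| ≤ M·K²·( E[T₁·(ρ̂(S̄₂) − ρ⁰(S̄₂))²] )^{1/2} ·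 ( E[T₁·T₂·(ν̂(S̄₂) − ν⁰(S̄₂))²] )^{1/2}. -/
open MeasureTheory ProbabilityTheory

lemma aux_integrable_of_bounded {Ω : Type*} [MeasurableSpace Ω] (P : Measure Ω)
    [IsFiniteMeasure P] {f : Ω → ℝ} (hf : Measurable f) (C : ℝ) (hC : ∀ ω, |f ω| ≤ C) :
    Integrable f P :=
  ⟨hf.aestronglyMeasurable, HasFiniteIntegral.of_bounded (C := C) (Filter.Eventually.of_forall hC)⟩

lemma aux_cs {Ω : Type*} [MeasurableSpace Ω] (P : Measure Ω) [IsFiniteMeasure P]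
    {f g : Ω → ℝ} (hf : Measurable f) (hg : Measurable g)
    (hf0 : ∀ ω, 0 ≤ f ω) (hg0 : ∀ ω, 0 ≤ g ω)
    (Cf : ℝ) (hCf : ∀ ω, |f ω| ≤ Cf) (Cg : ℝ) (hCg : ∀ ω, |g ω| ≤ Cg) :
    ∫ ω, f ω * g ω ∂P ≤ Real.sqrt (∫ ω, f ω ^ 2 ∂P) * Real.sqrt (∫ ω, g ω ^ 2 ∂P) := by
  have hpq : Real.HolderConjugate 2 2 := Real.HolderConjugate.two_two
  have hfL : MemLp f (ENNReal.ofReal 2) P :=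
    MemLp.of_bound hf.aestronglyMeasurable Cf (Filter.Eventually.of_forall fun ω => by
      simpa [Real.norm_eq_abs] using hCf ω)
  have hgL : MemLp g (ENNReal.ofReal 2) P :=
    MemLp.of_bound hg.aestronglyMeasurable Cg (Filter.Eventually.of_forall fun ω => by
      simpa [Real.norm_eq_abs] using hCg ω)
  have h := integral_mul_le_Lp_mul_Lq_of_nonneg hpq
    (Filter.Eventually.of_forall hf0) (Filter.Eventually.of_forall hg0) hfL hgL
  have e1 : ∫ ω, f ω ^ (2:ℝ) ∂P = ∫ ω, f ω ^ 2 ∂P := by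
    refine integral_congr_ae (Filter.Eventually.of_forall fun ω => ?_)
    show f ω ^ (2:ℝ) = f ω ^ 2
    rw [← Real.rpow_natCast (f ω) 2]; norm_num
  have e2 : ∫ ω, g ω ^ (2:ℝ) ∂P = ∫ ω, g ω ^ 2 ∂P := by
    refine integral_congr_ae (Filter.Eventually.of_forall fun ω => ?_)
    show g ω ^ (2:ℝ) = g ω ^ 2
    rw [← Real.rpow_natCast (g ω) 2]; norm_num
  have hi1 : 0 ≤ ∫ ω, f ω ^ 2 ∂P := integral_nonneg fun ω => sq_nonneg _
  have hi2 : 0 ≤ ∫ ω, g ω ^ 2 ∂P := integral_nonneg fun ω => sq_nonneg _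
  rw [e1, e2] at h
  calc ∫ ω, f ω * g ω ∂P ≤ (∫ ω, f ω ^ 2 ∂P) ^ (1/2:ℝ) * (∫ ω, g ω ^ 2 ∂P) ^ (1/2:ℝ) := h
    _ = _ := by rw [Real.sqrt_eq_rpow, Real.sqrt_eq_rpow]

/-- Representation and Cauchy–Schwarz product bound for the second bias term
`R₂ = E[(T₁/π̂(S₁))·(1 − ρ⁰(S̄₂)/ρ̂(S̄₂))·(ν̂(S̄₂) − ν⁰(S̄₂))]` in the dynamic treatment setup. -/
theorem dte_second_bias_term_product_bound
    {Ω : Type*} [MeasurableSpace Ω]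
    (P : Measure Ω) [IsProbabilityMeasure P]
    (d₁ d₂ : ℕ)
    (S1 : Ω → (Fin d₁ → ℝ)) (hS1 : Measurable S1)
    (S2 : Ω → (Fin d₂ → ℝ)) (hS2 : Measurable S2)
    (T1 T2 : Ω → ℝ) (hT1 : Measurable T1) (hT2 : Measurable T2)
    (hT1_01 : ∀ ω, T1 ω = 0 ∨ T1 ω = 1) (hT2_01 : ∀ ω, T2 ω = 0 ∨ T2 ω = 1)
    (M : ℝ) (hM : 0 < M)
    (ρ0 : (Fin d₁ → ℝ) × (Fin d₂ → ℝ) → ℝ) (hρ0m : Measurable ρ0) (hρ0b : ∃ C, ∀ x, |ρ0 x| ≤ C)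
    (hρ0mom : ∀ h : (Fin d₁ → ℝ) × (Fin d₂ → ℝ) → ℝ, Measurable h → (∃ C, ∀ x, |h x| ≤ C) →
      ∫ ω, T1 ω * T2 ω * h (S1 ω, S2 ω) ∂P = ∫ ω, T1 ω * ρ0 (S1 ω, S2 ω) * h (S1 ω, S2 ω) ∂P)
    (hpos : ∀ᵐ ω ∂P, 1 / M ≤ ρ0 (S1 ω, S2 ω))
    (ν0 : (Fin d₁ → ℝ) × (Fin d₂ → ℝ) → ℝ) (hν0m : Measurable ν0) (hν0b : ∃ C, ∀ x, |ν0 x| ≤ C)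
    (K : ℝ) (hK : 0 < K)
    (πh : (Fin d₁ → ℝ) → ℝ) (ρh νh : (Fin d₁ → ℝ) × (Fin d₂ → ℝ) → ℝ)
    (hπhm : Measurable πh) (hρhm : Measurable ρh) (hνhm : Measurable νh)
    (hπhb : ∃ C, ∀ x, |πh x| ≤ C) (hρhb : ∃ C, ∀ x, |ρh x| ≤ C) (hνhb : ∃ C, ∀ x, |νh x| ≤ C)
    (hπhK : ∀ x, 1 / K ≤ πh x) (hρhK : ∀ x, 1 / K ≤ ρh x) :
    ((∫ ω, (T1 ω / πh (S1 ω)) * (1 - ρ0 (S1 ω, S2 ω) / ρh (S1 ω, S2 ω))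
          * (νh (S1 ω, S2 ω) - ν0 (S1 ω, S2 ω)) ∂P)
        = ∫ ω, T1 ω * T2 ω * (ρh (S1 ω, S2 ω) - ρ0 (S1 ω, S2 ω))
            * (νh (S1 ω, S2 ω) - ν0 (S1 ω, S2 ω))
            / (πh (S1 ω) * ρh (S1 ω, S2 ω) * ρ0 (S1 ω, S2 ω)) ∂P)
      ∧ |∫ ω, (T1 ω / πh (S1 ω)) * (1 - ρ0 (S1 ω, S2 ω) / ρh (S1 ω, S2 ω))
            * (νh (S1 ω, S2 ω) - ν0 (S1 ω, S2 ω)) ∂P|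
          ≤ M * K ^ 2 * Real.sqrt (∫ ω, T1 ω * (ρh (S1 ω, S2 ω) - ρ0 (S1 ω, S2 ω)) ^ 2 ∂P)
              * Real.sqrt (∫ ω, T1 ω * T2 ω * (νh (S1 ω, S2 ω) - ν0 (S1 ω, S2 ω)) ^ 2 ∂P) := by
  obtain ⟨Cρ0, hCρ0⟩ := hρ0b
  obtain ⟨Cν0, hCν0⟩ := hν0b
  obtain ⟨Cρh, hCρh⟩ := hρhb
  obtain ⟨Cνh, hCνh⟩ := hνhb
  have hCρ0nn : 0 ≤ Cρ0 := le_trans (abs_nonneg _) (hCρ0 0)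
  have hCν0nn : 0 ≤ Cν0 := le_trans (abs_nonneg _) (hCν0 0)
  have hCρhnn : 0 ≤ Cρh := le_trans (abs_nonneg _) (hCρh 0)
  have hCνhnn : 0 ≤ Cνh := le_trans (abs_nonneg _) (hCνh 0)
  have hApos : ∀ ω, 0 < πh (S1 ω) := fun ω => lt_of_lt_of_le (by positivity) (hπhK _)
  have hBpos : ∀ x, 0 < ρh x := fun x => lt_of_lt_of_le (by positivity) (hρhK x)
  have hT1nn : ∀ ω, 0 ≤ T1 ω := fun ω => by rcases hT1_01 ω with h | h <;> rw [h] <;> norm_num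
  have hT2nn : ∀ ω, 0 ≤ T2 ω := fun ω => by rcases hT2_01 ω with h | h <;> rw [h] <;> norm_num
  have hT1le : ∀ ω, T1 ω ≤ 1 := fun ω => by rcases hT1_01 ω with h | h <;> rw [h] <;> norm_num
  have hT2le : ∀ ω, T2 ω ≤ 1 := fun ω => by rcases hT2_01 ω with h | h <;> rw [h] <;> norm_num
  have hT1sq : ∀ ω, T1 ω * T1 ω = T1 ω := fun ω => by
    rcases hT1_01 ω with h | h <;> rw [h] <;> norm_num
  have hT2sq : ∀ ω, T2 ω * T2 ω = T2 ω := fun ω => by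
    rcases hT2_01 ω with h | h <;> rw [h] <;> norm_num
  -- truncated ρ0
  set ρ0' : (Fin d₁ → ℝ) × (Fin d₂ → ℝ) → ℝ := fun x => max (ρ0 x) (1/M) with hρ0'def
  have hρ0'pos : ∀ x, 0 < ρ0' x := fun x => lt_of_lt_of_le (by positivity) (le_max_right _ _)
  set h : (Fin d₁ → ℝ) × (Fin d₂ → ℝ) → ℝ := fun x =>
    (ρh x - ρ0 x) * (νh x - ν0 x) / (πh x.1 * ρh x * ρ0' x) with hdef
  have hm : Measurable h := ((hρhm.sub hρ0m).mul (hνhm.sub hν0m)).div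
    (((hπhm.comp measurable_fst).mul hρhm).mul (hρ0m.max measurable_const))
  have hXb : ∀ x, |ρh x - ρ0 x| ≤ Cρh + Cρ0 := fun x =>
    le_trans (abs_sub _ _) (add_le_add (hCρh x) (hCρ0 x))
  have hYb : ∀ x, |νh x - ν0 x| ≤ Cνh + Cν0 := fun x =>
    le_trans (abs_sub _ _) (add_le_add (hCνh x) (hCν0 x))
  have hdpos : (0:ℝ) < 1/K * (1/K) * (1/M) := by positivity
  have hb : ∃ C, ∀ x, |h x| ≤ C := by
    refine ⟨(Cρh + Cρ0) * (Cνh + Cν0) / (1/K * (1/K) * (1/M)), fun x => ?_⟩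
    have hAx : 0 < πh x.1 := lt_of_lt_of_le (by positivity) (hπhK _)
    have hden : 1/K * (1/K) * (1/M) ≤ πh x.1 * ρh x * ρ0' x := by
      have h1 := hπhK x.1
      have h2 := hρhK x
      have h3 : 1/M ≤ ρ0' x := le_max_right _ _
      exact mul_le_mul (mul_le_mul h1 h2 (by positivity) hAx.le) h3 (by positivity)
        (mul_pos hAx (hBpos x)).le
    have hdx : 0 < πh x.1 * ρh x * ρ0' x := lt_of_lt_of_le hdpos hden
    have hnum : |(ρh x - ρ0 x) * (νh x - ν0 x)| ≤ (Cρh + Cρ0) * (Cνh + Cν0) := by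
      rw [abs_mul]
      exact mul_le_mul (hXb x) (hYb x) (abs_nonneg _) (by positivity)
    rw [hdef]
    simp only
    rw [abs_div, abs_of_pos hdx]
    exact div_le_div₀ (by positivity) hnum hdpos hden
  have key := hρ0mom h hm hb
  -- representation
  have heq1 : (∫ ω, (T1 ω / πh (S1 ω)) * (1 - ρ0 (S1 ω, S2 ω) / ρh (S1 ω, S2 ω))
          * (νh (S1 ω, S2 ω) - ν0 (S1 ω, S2 ω)) ∂P)
      = ∫ ω, T1 ω * ρ0 (S1 ω, S2 ω) * h (S1 ω, S2 ω) ∂P := by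
    refine integral_congr_ae ?_
    filter_upwards [hpos] with ω hω
    have hc : 0 < ρ0 (S1 ω, S2 ω) := lt_of_lt_of_le (by positivity) hω
    have hmax : ρ0' (S1 ω, S2 ω) = ρ0 (S1 ω, S2 ω) := max_eq_left hω
    have hA := (hApos ω).ne'
    have hB := (hBpos (S1 ω, S2 ω)).ne'
    have hC := hc.ne'
    simp only [hdef, hmax]
    field_simp
  have heq2 : (∫ ω, T1 ω * T2 ω * h (S1 ω, S2 ω) ∂P)
      = ∫ ω, T1 ω * T2 ω * (ρh (S1 ω, S2 ω) - ρ0 (S1 ω, S2 ω))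
          * (νh (S1 ω, S2 ω) - ν0 (S1 ω, S2 ω))
          / (πh (S1 ω) * ρh (S1 ω, S2 ω) * ρ0 (S1 ω, S2 ω)) ∂P := by
    refine integral_congr_ae ?_
    filter_upwards [hpos] with ω hω
    have hmax : ρ0' (S1 ω, S2 ω) = ρ0 (S1 ω, S2 ω) := max_eq_left hω
    simp only [hdef, hmax]
    ring
  have hrep := heq1.trans (key.symm.trans heq2)
  refine ⟨hrep, ?_⟩
  -- Cauchy–Schwarz bound
  set F : Ω → ℝ := fun ω => T1 ω * |ρh (S1 ω, S2 ω) - ρ0 (S1 ω, S2 ω)| with hFdef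
  set G : Ω → ℝ := fun ω => T1 ω * T2 ω * |νh (S1 ω, S2 ω) - ν0 (S1 ω, S2 ω)| with hGdef
  have hS12 : Measurable (fun ω => (S1 ω, S2 ω)) := hS1.prodMk hS2
  have hFm : Measurable F := hT1.mul ((hρhm.sub hρ0m).comp hS12).abs
  have hGm : Measurable G := (hT1.mul hT2).mul ((hνhm.sub hν0m).comp hS12).abs
  have hF0 : ∀ ω, 0 ≤ F ω := fun ω => mul_nonneg (hT1nn ω) (abs_nonneg _)
  have hG0 : ∀ ω, 0 ≤ G ω := fun ω =>
    mul_nonneg (mul_nonneg (hT1nn ω) (hT2nn ω)) (abs_nonneg _)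
  have hFb : ∀ ω, |F ω| ≤ Cρh + Cρ0 := fun ω => by
    rw [hFdef]; simp only
    rw [abs_mul, abs_abs, abs_of_nonneg (hT1nn ω)]
    calc T1 ω * |ρh (S1 ω, S2 ω) - ρ0 (S1 ω, S2 ω)| ≤ 1 * (Cρh + Cρ0) :=
          mul_le_mul (hT1le ω) (hXb _) (abs_nonneg _) (by norm_num)
      _ = Cρh + Cρ0 := one_mul _
  have hGb : ∀ ω, |G ω| ≤ Cνh + Cν0 := fun ω => by
    rw [hGdef]; simp only
    rw [abs_mul, abs_abs, abs_mul, abs_of_nonneg (hT1nn ω), abs_of_nonneg (hT2nn ω)]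
    calc T1 ω * T2 ω * |νh (S1 ω, S2 ω) - ν0 (S1 ω, S2 ω)| ≤ 1 * 1 * (Cνh + Cν0) := by
          refine mul_le_mul ?_ (hYb _) (abs_nonneg _) (by norm_num)
          exact mul_le_mul (hT1le ω) (hT2le ω) (hT2nn ω) (by norm_num)
      _ = Cνh + Cν0 := by ring
  have hMK2 : (0:ℝ) ≤ M * K ^ 2 := by positivity
  have hinv : (1:ℝ)/(1/K * (1/K) * (1/M)) = M * K^2 := by field_simp
  -- a.e. pointwise bound on the integrand
  have hbound : ∀ᵐ ω ∂P, ‖T1 ω * T2 ω * (ρh (S1 ω, S2 ω) - ρ0 (S1 ω, S2 ω))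
      * (νh (S1 ω, S2 ω) - ν0 (S1 ω, S2 ω))
      / (πh (S1 ω) * ρh (S1 ω, S2 ω) * ρ0 (S1 ω, S2 ω))‖
      ≤ M * K ^ 2 * (F ω * G ω) := by
    filter_upwards [hpos] with ω hω
    have hc : 0 < ρ0 (S1 ω, S2 ω) := lt_of_lt_of_le (by positivity) hω
    have hden : 0 < πh (S1 ω) * ρh (S1 ω, S2 ω) * ρ0 (S1 ω, S2 ω) :=
      mul_pos (mul_pos (hApos ω) (hBpos _)) hc
    have hdenge : 1/K * (1/K) * (1/M) ≤ πh (S1 ω) * ρh (S1 ω, S2 ω) * ρ0 (S1 ω, S2 ω) := by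
      have h1 := hπhK (S1 ω)
      have h2 := hρhK (S1 ω, S2 ω)
      exact mul_le_mul (mul_le_mul h1 h2 (by positivity) (hApos ω).le) hω (by positivity)
        (mul_pos (hApos ω) (hBpos _)).le
    have hinvle : 1 / (πh (S1 ω) * ρh (S1 ω, S2 ω) * ρ0 (S1 ω, S2 ω)) ≤ M * K ^ 2 := by
      rw [← hinv]
      exact one_div_le_one_div_of_le hdpos hdenge
    set x := |ρh (S1 ω, S2 ω) - ρ0 (S1 ω, S2 ω)| with hx
    set y := |νh (S1 ω, S2 ω) - ν0 (S1 ω, S2 ω)| with hy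
    have habs : ‖T1 ω * T2 ω * (ρh (S1 ω, S2 ω) - ρ0 (S1 ω, S2 ω))
        * (νh (S1 ω, S2 ω) - ν0 (S1 ω, S2 ω))
        / (πh (S1 ω) * ρh (S1 ω, S2 ω) * ρ0 (S1 ω, S2 ω))‖
        = T1 ω * T2 ω * x * y / (πh (S1 ω) * ρh (S1 ω, S2 ω) * ρ0 (S1 ω, S2 ω)) := by
      rw [Real.norm_eq_abs, abs_div, abs_of_pos hden, abs_mul, abs_mul, abs_mul,
        abs_of_nonneg (hT1nn ω), abs_of_nonneg (hT2nn ω)]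
    have hfg : F ω * G ω = T1 ω * T2 ω * x * y := by
      rw [hFdef, hGdef]
      simp only [← hx, ← hy]
      linear_combination (T2 ω * x * y) * hT1sq ω
    have htnn : 0 ≤ T1 ω * T2 ω * x * y :=
      mul_nonneg (mul_nonneg (mul_nonneg (hT1nn ω) (hT2nn ω)) (abs_nonneg _)) (abs_nonneg _)
    rw [habs]
    calc T1 ω * T2 ω * x * y / (πh (S1 ω) * ρh (S1 ω, S2 ω) * ρ0 (S1 ω, S2 ω))
        = T1 ω * T2 ω * x * y * (1 / (πh (S1 ω) * ρh (S1 ω, S2 ω) * ρ0 (S1 ω, S2 ω))) := by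
          ring
      _ ≤ T1 ω * T2 ω * x * y * (M * K ^ 2) := mul_le_mul_of_nonneg_left hinvle htnn
      _ = M * K ^ 2 * (F ω * G ω) := by rw [hfg]; ring
  have hFGint : Integrable (fun ω => M * K ^ 2 * (F ω * G ω)) P := by
    refine aux_integrable_of_bounded P ((hFm.mul hGm).const_mul _)
      (M * K ^ 2 * ((Cρh + Cρ0) * (Cνh + Cν0))) fun ω => ?_
    rw [abs_mul, abs_of_nonneg hMK2, abs_mul]
    refine mul_le_mul_of_nonneg_left ?_ hMK2
    exact mul_le_mul (hFb ω) (hGb ω) (abs_nonneg _) (by positivity)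
  have hcs := aux_cs P hFm hGm hF0 hG0 (Cρh + Cρ0) hFb (Cνh + Cν0) hGb
  have eF : ∫ ω, F ω ^ 2 ∂P = ∫ ω, T1 ω * (ρh (S1 ω, S2 ω) - ρ0 (S1 ω, S2 ω)) ^ 2 ∂P := by
    refine integral_congr_ae (Filter.Eventually.of_forall fun ω => ?_)
    show F ω ^ 2 = _
    rw [hFdef]
    simp only
    rw [mul_pow, sq_abs, pow_two (T1 ω), hT1sq ω]
  have eG : ∫ ω, G ω ^ 2 ∂P = ∫ ω, T1 ω * T2 ω * (νh (S1 ω, S2 ω) - ν0 (S1 ω, S2 ω)) ^ 2 ∂P := by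
    refine integral_congr_ae (Filter.Eventually.of_forall fun ω => ?_)
    show G ω ^ 2 = _
    rw [hGdef]
    simp only
    rw [mul_pow, mul_pow, sq_abs, pow_two (T1 ω), pow_two (T2 ω), hT1sq ω, hT2sq ω]
  calc |∫ ω, (T1 ω / πh (S1 ω)) * (1 - ρ0 (S1 ω, S2 ω) / ρh (S1 ω, S2 ω))
          * (νh (S1 ω, S2 ω) - ν0 (S1 ω, S2 ω)) ∂P|
      = ‖∫ ω, T1 ω * T2 ω * (ρh (S1 ω, S2 ω) - ρ0 (S1 ω, S2 ω))
          * (νh (S1 ω, S2 ω) - ν0 (S1 ω, S2 ω))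
          / (πh (S1 ω) * ρh (S1 ω, S2 ω) * ρ0 (S1 ω, S2 ω)) ∂P‖ := by
        rw [hrep, Real.norm_eq_abs]
    _ ≤ ∫ ω, M * K ^ 2 * (F ω * G ω) ∂P := norm_integral_le_of_norm_le hFGint hbound
    _ = M * K ^ 2 * ∫ ω, F ω * G ω ∂P := integral_const_mul _ _
    _ ≤ M * K ^ 2 * (Real.sqrt (∫ ω, F ω ^ 2 ∂P) * Real.sqrt (∫ ω, G ω ^ 2 ∂P)) :=
        mul_le_mul_of_nonneg_left hcs hMK2
    _ = _ := by rw [eF, eG, ← mul_assoc]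
end
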